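/- arXiv:1401.0748 — 8 statements merged into one kernel-verified Lean document; each statement's English description precedes it below -/
import Mathlib

section
/- Let A ⊆ B(H) be a unital operator algebra and F a uniform algebra. Then every unital bounded algebra homomorphism φ: A → F is completely contractive, i.e. ‖(φ(a_ij))‖ ≤ ‖(a_ij)‖ for every d ∈ ℕ and every d×d matrix (a_ij) with entries in A. -/
set_option maxHeartbeats 1000000
set_option synthInstance.maxHeartbeats 1000000


/-- The norm of a `d × d` matrix of bounded operators on `H`, viewed as an operator
on the `ℓ²`-direct sum `H^d` (the C*-norm on `M_d(B(H))`). -/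
noncomputable def matOpNorm {H : Type*} [NormedAddCommGroup H] [NormedSpace ℂ H]
    {d : ℕ} (M : Matrix (Fin d) (Fin d) (H →L[ℂ] H)) : ℝ :=
  ‖((PiLp.continuousLinearEquiv 2 ℂ (fun _ : Fin d => H)).symm.toContinuousLinearMap.comp
      ((ContinuousLinearMap.pi fun i => ∑ j, (M i j).comp (ContinuousLinearMap.proj j)).comp
        (PiLp.continuousLinearEquiv 2 ℂ (fun _ : Fin d => H)).toContinuousLinearMap))‖

/-- `cod` is completely bounded relative to the matrix norms induced by `dom`. -/
def CompletelyBounded {ι H₂ H₃ : Type*}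
    [NormedAddCommGroup H₂] [NormedSpace ℂ H₂] [NormedAddCommGroup H₃] [NormedSpace ℂ H₃]
    (dom : ι → (H₂ →L[ℂ] H₂)) (cod : ι → (H₃ →L[ℂ] H₃)) : Prop :=
  ∃ C : ℝ, ∀ (d : ℕ) (M : Matrix (Fin d) (Fin d) ι),
    matOpNorm (fun i j => cod (M i j)) ≤ C * matOpNorm (fun i j => dom (M i j))

/-- The completely bounded norm of the map `dom i ↦ cod i`. -/
noncomputable def cbNormRel {ι H₂ H₃ : Type*}
    [NormedAddCommGroup H₂] [NormedSpace ℂ H₂] [NormedAddCommGroup H₃] [NormedSpace ℂ H₃]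
    (dom : ι → (H₂ →L[ℂ] H₂)) (cod : ι → (H₃ →L[ℂ] H₃)) : ℝ :=
  sSup { r : ℝ | ∃ (d : ℕ) (M : Matrix (Fin d) (Fin d) ι),
    matOpNorm (fun i j => dom (M i j)) ≤ 1 ∧ r = matOpNorm (fun i j => cod (M i j)) }

/-- The C*-norm of a matrix over `C(X, ℂ)`. -/
noncomputable def cMatNorm {X : Type*} [TopologicalSpace X] {d : ℕ}
    (M : Matrix (Fin d) (Fin d) C(X, ℂ)) : ℝ :=
  ⨆ x : X, ‖Matrix.toEuclideanCLM (𝕜 := ℂ) (Matrix.of fun i j => M i j x)‖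

local notation "⟪" x ", " y "⟫" => @inner ℂ _ _ x y

/-- The operator on `H^d` underlying `matOpNorm`. -/
noncomputable def matOpT {H : Type*} [NormedAddCommGroup H] [NormedSpace ℂ H]
    {d : ℕ} (M : Matrix (Fin d) (Fin d) (H →L[ℂ] H)) :
    PiLp 2 (fun _ : Fin d => H) →L[ℂ] PiLp 2 (fun _ : Fin d => H) :=
  ((PiLp.continuousLinearEquiv 2 ℂ (fun _ : Fin d => H)).symm.toContinuousLinearMap.comp
      ((ContinuousLinearMap.pi fun i => ∑ j, (M i j).comp (ContinuousLinearMap.proj j)).comp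
        (PiLp.continuousLinearEquiv 2 ℂ (fun _ : Fin d => H)).toContinuousLinearMap))

lemma matOpNorm_eq {H : Type*} [NormedAddCommGroup H] [NormedSpace ℂ H]
    {d : ℕ} (M : Matrix (Fin d) (Fin d) (H →L[ℂ] H)) :
    matOpNorm M = ‖matOpT M‖ := rfl

lemma matOpT_apply {H : Type*} [NormedAddCommGroup H] [NormedSpace ℂ H]
    {d : ℕ} (M : Matrix (Fin d) (Fin d) (H →L[ℂ] H))
    (v : PiLp 2 (fun _ : Fin d => H)) (i : Fin d) :
    matOpT M v i = ∑ j, M i j (v j) := by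
  simp [matOpT, ContinuousLinearMap.sum_apply]

lemma aux_pow_le {c r C : ℝ} (hc : 0 ≤ c) (hr : 0 ≤ r)
    (h : ∀ n : ℕ, c ^ (n + 1) ≤ C * r ^ (n + 1)) : c ≤ r := by
  by_contra hlt
  push_neg at hlt
  rcases eq_or_lt_of_le hr with h0 | h0
  · have h1 := h 0
    rw [← h0] at h1
    simp at h1
    nlinarith
  · have hq1 : 1 < c / r := (one_lt_div h0).mpr hlt
    obtain ⟨n, hn⟩ := pow_unbounded_of_one_lt C hq1
    have h2 : (c / r) ^ (n + 1) ≤ C := by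
      rw [div_pow, div_le_iff₀ (by positivity)]
      exact h n
    have h3 : (c / r) ^ n ≤ (c / r) ^ (n + 1) :=
      pow_le_pow_right₀ (le_of_lt hq1) (Nat.le_succ n)
    linarith

lemma aux_pilp_norm {H : Type*} [NormedAddCommGroup H] [InnerProductSpace ℂ H] {d : ℕ}
    (ξ : EuclideanSpace ℂ (Fin d)) (w : H) :
    ‖(show PiLp 2 (fun _ : Fin d => H) from WithLp.toLp 2 (fun i => ξ i • w))‖ = ‖ξ‖ * ‖w‖ := by
  have h3 : ‖(show PiLp 2 (fun _ : Fin d => H) from WithLp.toLp 2 (fun i => ξ i • w))‖ ^ 2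
      = (‖ξ‖ * ‖w‖) ^ 2 := by
    rw [PiLp.norm_sq_eq_of_L2, mul_pow, PiLp.norm_sq_eq_of_L2, Finset.sum_mul]
    refine Finset.sum_congr rfl fun i _ => ?_
    rw [norm_smul, mul_pow]
  calc ‖(show PiLp 2 (fun _ : Fin d => H) from WithLp.toLp 2 (fun i => ξ i • w))‖
      = Real.sqrt (‖(show PiLp 2 (fun _ : Fin d => H) from WithLp.toLp 2 (fun i => ξ i • w))‖ ^ 2) :=
        (Real.sqrt_sq (norm_nonneg _)).symm
    _ = Real.sqrt ((‖ξ‖ * ‖w‖) ^ 2) := by rw [h3]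
    _ = ‖ξ‖ * ‖w‖ := Real.sqrt_sq (by positivity)

lemma matOpNorm_bound {H : Type*} [NormedAddCommGroup H] [InnerProductSpace ℂ H] {d : ℕ}
    (M : Matrix (Fin d) (Fin d) (H →L[ℂ] H)) (ξ η : EuclideanSpace ℂ (Fin d)) (w v : H) :
    ‖∑ i, ∑ j, ((starRingEnd ℂ) (ξ i) * η j) * ⟪w, (M i j) v⟫‖
      ≤ matOpNorm M * (‖ξ‖ * ‖w‖) * (‖η‖ * ‖v‖) := by
  set x : PiLp 2 (fun _ : Fin d => H) := WithLp.toLp 2 (fun i => ξ i • w) with hx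
  set y : PiLp 2 (fun _ : Fin d => H) := WithLp.toLp 2 (fun j => η j • v) with hy
  have key : (∑ i, ∑ j, ((starRingEnd ℂ) (ξ i) * η j) * ⟪w, (M i j) v⟫) = ⟪x, matOpT M y⟫ := by
    rw [PiLp.inner_apply]
    refine Finset.sum_congr rfl fun i _ => ?_
    rw [matOpT_apply]
    have hxi : x i = ξ i • w := rfl
    rw [hxi, inner_smul_left, inner_sum, Finset.mul_sum]
    refine Finset.sum_congr rfl fun j _ => ?_
    have hyj : y j = η j • v := rfl
    rw [hyj, map_smul, inner_smul_right]
    ring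
  rw [key]
  calc ‖⟪x, matOpT M y⟫‖ ≤ ‖x‖ * ‖matOpT M y‖ := norm_inner_le_norm x _
    _ ≤ ‖x‖ * (‖matOpT M‖ * ‖y‖) :=
        mul_le_mul_of_nonneg_left ((matOpT M).le_opNorm y) (norm_nonneg x)
    _ = matOpNorm M * (‖ξ‖ * ‖w‖) * (‖η‖ * ‖v‖) := by
        rw [matOpNorm_eq]
        have h1 : ‖x‖ = ‖ξ‖ * ‖w‖ := aux_pilp_norm ξ w
        have h2 : ‖y‖ = ‖η‖ * ‖v‖ := aux_pilp_norm η v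
        rw [h1, h2]; ring

lemma key_A {H : Type*} [NormedAddCommGroup H] [InnerProductSpace ℂ H] {d : ℕ}
    (M : Matrix (Fin d) (Fin d) (H →L[ℂ] H)) (ξ η : EuclideanSpace ℂ (Fin d)) :
    ‖∑ i, ∑ j, ((starRingEnd ℂ) (ξ i) * η j) • M i j‖ ≤ matOpNorm M * ‖ξ‖ * ‖η‖ := by
  have hK : 0 ≤ matOpNorm M := by rw [matOpNorm_eq]; exact norm_nonneg (matOpT M)
  refine ContinuousLinearMap.opNorm_le_bound _ (by positivity) fun v => ?_
  set b : H →L[ℂ] H := ∑ i, ∑ j, ((starRingEnd ℂ) (ξ i) * η j) • M i j with hb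
  have hbv : b v = ∑ i, ∑ j, ((starRingEnd ℂ) (ξ i) * η j) • ((M i j) v) := by
    simp [hb, ContinuousLinearMap.sum_apply]
  have hinner : ⟪b v, b v⟫ = ∑ i, ∑ j, ((starRingEnd ℂ) (ξ i) * η j) * ⟪b v, (M i j) v⟫ := by
    nth_rewrite 2 [hbv]
    rw [inner_sum]
    refine Finset.sum_congr rfl fun i _ => ?_
    rw [inner_sum]
    exact Finset.sum_congr rfl fun j _ => by rw [inner_smul_right]
  have hnorm : ‖⟪b v, b v⟫‖ = ‖b v‖ ^ 2 := by
    rw [inner_self_eq_norm_sq_to_K]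
    rw [norm_pow]
    norm_num
  have h2 : ‖b v‖ ^ 2 ≤ matOpNorm M * (‖ξ‖ * ‖b v‖) * (‖η‖ * ‖v‖) := by
    have h := matOpNorm_bound M ξ η (b v) v
    rw [← hinner, hnorm] at h
    exact h
  rcases eq_or_lt_of_le (norm_nonneg (b v)) with h0 | h0
  · rw [← h0]; positivity
  · nlinarith [norm_nonneg ξ, norm_nonneg η, norm_nonneg v]

lemma key_C {d : ℕ} (Mc : Matrix (Fin d) (Fin d) ℂ) (K : ℝ) (hK : 0 ≤ K)
    (h : ∀ ξ η : EuclideanSpace ℂ (Fin d),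
      ‖∑ i, ∑ j, (starRingEnd ℂ) (ξ i) * η j * Mc i j‖ ≤ K * ‖ξ‖ * ‖η‖) :
    ‖Matrix.toEuclideanCLM (𝕜 := ℂ) Mc‖ ≤ K := by
  refine ContinuousLinearMap.opNorm_le_bound _ hK fun η => ?_
  set u := Matrix.toEuclideanCLM (𝕜 := ℂ) Mc η with hu
  have h1 : ⟪u, u⟫ = ∑ i, ∑ j, (starRingEnd ℂ) (u i) * η j * Mc i j := by
    rw [PiLp.inner_apply]
    refine Finset.sum_congr rfl fun i _ => ?_
    have hui : u i = ∑ j, Mc i j * η j := rfl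
    rw [RCLike.inner_apply]
    nth_rewrite 1 [hui]
    rw [Finset.sum_mul]
    exact Finset.sum_congr rfl fun j _ => by ring
  have hnorm : ‖⟪u, u⟫‖ = ‖u‖ ^ 2 := by
    rw [inner_self_eq_norm_sq_to_K, norm_pow]
    norm_num
  have h2 : ‖u‖ ^ 2 ≤ K * ‖u‖ * ‖η‖ := by
    have h3 := h u η
    rw [← h1, hnorm] at h3
    exact h3
  rcases eq_or_lt_of_le (norm_nonneg u) with h0 | h0
  · rw [← h0]; positivity
  · nlinarith [norm_nonneg η]

/-- **Lemma 2.3 (i)**: every unital bounded algebra homomorphism from a unital operator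
algebra `A ⊆ B(H)` into a uniform algebra `F ⊆ C(X)` is completely contractive. -/
theorem stmt3
    {H : Type*} [NormedAddCommGroup H] [InnerProductSpace ℂ H] [CompleteSpace H]
    {X : Type*} [TopologicalSpace X] [CompactSpace X] [T2Space X]
    (A : Subalgebra ℂ (H →L[ℂ] H))
    (F : Subalgebra ℂ C(X, ℂ)) (hF : IsClosed (F : Set C(X, ℂ)))
    (φ : A →ₐ[ℂ] F)
    (hb : ∃ C : ℝ, ∀ a : A, ‖(φ a : C(X, ℂ))‖ ≤ C * ‖(a : H →L[ℂ] H)‖) :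
    ∀ (d : ℕ) (M : Matrix (Fin d) (Fin d) A),
      cMatNorm (fun i j => (φ (M i j) : C(X, ℂ))) ≤
        matOpNorm (fun i j => (M i j : H →L[ℂ] H)) := by
  obtain ⟨C, hC⟩ := hb
  intro d M
  set K := matOpNorm (fun i j => ((M i j : H →L[ℂ] H))) with hKdef
  have hK0 : 0 ≤ K := by rw [hKdef]; exact norm_nonneg (matOpT (fun i j => ((M i j : H →L[ℂ] H))))
  unfold cMatNorm
  refine Real.iSup_le (fun x => ?_) hK0
  -- the character at `x`
  set χ : A →ₐ[ℂ] ℂ := (ContinuousMap.evalAlgHom ℂ ℂ x).comp (F.val.comp φ) with hχdef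
  have hχapp : ∀ a : A, χ a = (φ a : C(X, ℂ)) x := fun a => rfl
  have hχbd : ∀ a : A, ‖χ a‖ ≤ max C 0 * ‖(a : H →L[ℂ] H)‖ := fun a =>
    le_trans (le_trans (ContinuousMap.norm_coe_le_norm (φ a : C(X, ℂ)) x) (hC a))
      (mul_le_mul_of_nonneg_right (le_max_left C 0) (norm_nonneg _))
  have hχ : ∀ a : A, ‖χ a‖ ≤ ‖(a : H →L[ℂ] H)‖ := by
    intro a
    refine aux_pow_le (C := max C 0) (norm_nonneg _) (norm_nonneg _) fun n => ?_
    have h1 : ‖χ a‖ ^ (n + 1) = ‖χ (a ^ (n + 1))‖ := by rw [map_pow, norm_pow]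
    have h3 : ((a ^ (n + 1) : A) : H →L[ℂ] H) = ((a : H →L[ℂ] H)) ^ (n + 1) := by
      push_cast
      ring
    have h4 : ‖((a : H →L[ℂ] H)) ^ (n + 1)‖ ≤ ‖(a : H →L[ℂ] H)‖ ^ (n + 1) :=
      norm_pow_le' _ (Nat.succ_pos n)
    calc ‖χ a‖ ^ (n + 1) = ‖χ (a ^ (n + 1))‖ := h1
      _ ≤ max C 0 * ‖((a ^ (n + 1) : A) : H →L[ℂ] H)‖ := hχbd _
      _ = max C 0 * ‖((a : H →L[ℂ] H)) ^ (n + 1)‖ := by rw [h3]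
      _ ≤ max C 0 * ‖(a : H →L[ℂ] H)‖ ^ (n + 1) :=
          mul_le_mul_of_nonneg_left h4 (le_max_right C 0)
  refine key_C _ K hK0 fun ξ η => ?_
  set b : A := ∑ i, ∑ j, ((starRingEnd ℂ) (ξ i) * η j) • M i j with hbdef
  have hχb : χ b = ∑ i, ∑ j, (starRingEnd ℂ) (ξ i) * η j *
      ((Matrix.of fun i j => ((φ (M i j) : C(X, ℂ)) x)) i j) := by
    rw [hbdef, map_sum]
    refine Finset.sum_congr rfl fun i _ => ?_
    rw [map_sum]
    refine Finset.sum_congr rfl fun j _ => ?_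
    rw [map_smul]
    simp only [Matrix.of_apply, smul_eq_mul]
    rw [hχapp]
  have hbcoe : ((b : A) : H →L[ℂ] H)
      = ∑ i, ∑ j, ((starRingEnd ℂ) (ξ i) * η j) • ((M i j : H →L[ℂ] H)) := by
    rw [hbdef]
    push_cast
    rfl
  calc ‖∑ i, ∑ j, (starRingEnd ℂ) (ξ i) * η j *
        ((Matrix.of fun i j => ((φ (M i j) : C(X, ℂ)) x)) i j)‖
      = ‖χ b‖ := by rw [hχb]
    _ ≤ ‖(b : H →L[ℂ] H)‖ := hχ b
    _ = ‖∑ i, ∑ j, ((starRingEnd ℂ) (ξ i) * η j) • ((M i j : H →L[ℂ] H))‖ := by rw [hbcoe]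
    _ ≤ K * ‖ξ‖ * ‖η‖ := key_A (fun i j => ((M i j : H →L[ℂ] H))) ξ η
end

section
/- Let A ⊆ B(H₁) and B ⊆ B(H₂) be unital operator algebras, and suppose there exist uniform algebras F₁, F₂ and unital completely isometric algebra isomorphisms F₁ → A and F₂ → B. Then every unital completely bounded isomorphism φ: A → B is completely isometric, i.e. ‖(φ(a_ij))‖ = ‖(a_ij)‖ for every d ∈ ℕ and every d×d matrix (a_ij) with entries in A. -/
/-- A uniform algebra: a closed unital subalgebra of `C(X)` for a compact Hausdorff space `X`. -/
structure UniformAlgebraPkg : Type (u + 1) where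
  carrier : Type u
  [tops : TopologicalSpace carrier]
  [comp : CompactSpace carrier]
  [t2 : T2Space carrier]
  F : Subalgebra ℂ C(carrier, ℂ)
  closed : IsClosed (F : Set C(carrier, ℂ))

attribute [instance] UniformAlgebraPkg.tops UniformAlgebraPkg.comp UniformAlgebraPkg.t2


open scoped ComplexConjugate

section Aux

lemma toEuclideanCLM_apply_coord {d : ℕ} (A : Matrix (Fin d) (Fin d) ℂ)
    (ξ : EuclideanSpace ℂ (Fin d)) (i : Fin d) :
    Matrix.toEuclideanCLM (𝕜 := ℂ) A ξ i = ∑ j, A i j * ξ j := rfl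

lemma coord_norm_le {d : ℕ} (ξ : EuclideanSpace ℂ (Fin d)) (j : Fin d) : ‖ξ j‖ ≤ ‖ξ‖ := by
  rw [EuclideanSpace.norm_eq]
  rw [show ‖ξ j‖ = Real.sqrt (‖ξ j‖ ^ 2) by rw [Real.sqrt_sq (norm_nonneg _)]]
  exact Real.sqrt_le_sqrt (Finset.single_le_sum (f := fun k => ‖ξ k‖ ^ 2)
    (fun k _ => sq_nonneg _) (Finset.mem_univ j))

lemma toEuclideanCLM_stdBasis {d : ℕ} (i j : Fin d) (a : ℂ) (ξ : EuclideanSpace ℂ (Fin d)) :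
    Matrix.toEuclideanCLM (𝕜 := ℂ) (Matrix.single i j a) ξ
      = EuclideanSpace.single i (a * ξ j) := by
  ext k
  rw [toEuclideanCLM_apply_coord, EuclideanSpace.single_apply]
  simp [Matrix.single, ite_and, eq_comm]

lemma norm_toEuclideanCLM_le_sum {d : ℕ} (A : Matrix (Fin d) (Fin d) ℂ) :
    ‖Matrix.toEuclideanCLM (𝕜 := ℂ) A‖ ≤ ∑ i, ∑ j, ‖A i j‖ := by
  nth_rewrite 1 [Matrix.matrix_eq_sum_single A]
  rw [map_sum]
  refine (norm_sum_le _ _).trans (Finset.sum_le_sum fun i _ => ?_)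
  rw [map_sum]
  refine (norm_sum_le _ _).trans (Finset.sum_le_sum fun j _ => ?_)
  refine ContinuousLinearMap.opNorm_le_bound _ (norm_nonneg _) fun ξ => ?_
  rw [toEuclideanCLM_stdBasis, EuclideanSpace.norm_single, norm_mul]
  exact mul_le_mul_of_nonneg_left (coord_norm_le ξ j) (norm_nonneg _)

lemma inner_toEuclideanCLM {d : ℕ} (A : Matrix (Fin d) (Fin d) ℂ)
    (η ξ : EuclideanSpace ℂ (Fin d)) :
    (inner ℂ η (Matrix.toEuclideanCLM (𝕜 := ℂ) A ξ) : ℂ)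
      = ∑ i, ∑ j, (conj (η i) * ξ j) * A i j := by
  simp only [PiLp.inner_apply, RCLike.inner_apply, toEuclideanCLM_apply_coord, Finset.mul_sum, Finset.sum_mul]
  refine Finset.sum_congr rfl fun i _ => Finset.sum_congr rfl fun j _ => by ring

set_option maxHeartbeats 1000000 in
lemma char_matrix_norm_le {X : Type*} [TopologicalSpace X] [CompactSpace X]
    {F : Subalgebra ℂ C(X, ℂ)} (hF : IsClosed (F : Set C(X, ℂ)))
    (χ : F →ₐ[ℂ] ℂ) {d : ℕ} (N : Matrix (Fin d) (Fin d) F) :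
    ‖Matrix.toEuclideanCLM (𝕜 := ℂ) (Matrix.of fun i j => χ (N i j))‖ ≤
      cMatNorm (fun i j => (N i j : C(X, ℂ))) := by
  haveI : CompleteSpace F := hF.completeSpace_coe
  set C := cMatNorm (fun i j => (N i j : C(X, ℂ))) with hC
  have hC0 : 0 ≤ C := Real.iSup_nonneg fun _ => norm_nonneg _
  have hpt : ∀ x : X,
      ‖Matrix.toEuclideanCLM (𝕜 := ℂ) (Matrix.of fun i j => (N i j : C(X, ℂ)) x)‖ ≤ C := by
    intro x
    refine le_ciSup (f := fun x : X =>
      ‖Matrix.toEuclideanCLM (𝕜 := ℂ) (Matrix.of fun i j => (N i j : C(X, ℂ)) x)‖) ?_ x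
    refine ⟨∑ i, ∑ j, ‖(N i j : C(X, ℂ))‖, ?_⟩
    rintro _ ⟨y, rfl⟩
    refine (norm_toEuclideanCLM_le_sum _).trans
      (Finset.sum_le_sum fun i _ => Finset.sum_le_sum fun j _ => ?_)
    exact (N i j : C(X, ℂ)).norm_coe_le_norm y
  have hχle : ∀ g : F, ‖χ g‖ ≤ ‖g‖ := by
    intro g
    have h1 : ‖(1 : F)‖ ≤ 1 := by
      have : ‖(1 : F)‖ = ‖((1 : F) : C(X, ℂ))‖ := rfl
      rw [this, Subalgebra.coe_one]
      exact (ContinuousMap.norm_le _ zero_le_one).mpr fun x => by simp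
    calc ‖χ g‖ ≤ ‖g‖ * ‖(1 : F)‖ := AlgHom.norm_apply_le_self_mul_norm_one χ g
      _ ≤ ‖g‖ * 1 := mul_le_mul_of_nonneg_left h1 (norm_nonneg _)
      _ = ‖g‖ := mul_one _
  refine ContinuousLinearMap.opNorm_le_bound _ hC0 fun ξ => ?_
  set A : Matrix (Fin d) (Fin d) ℂ := Matrix.of fun i j => χ (N i j) with hA
  set η : EuclideanSpace ℂ (Fin d) := Matrix.toEuclideanCLM (𝕜 := ℂ) A ξ with hη
  set g : F := ∑ i, ∑ j, ((conj (η i) * ξ j) • N i j) with hg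
  have hgval : (g : C(X, ℂ)) = ∑ i, ∑ j, ((conj (η i) * ξ j) • (N i j : C(X, ℂ))) := by
    push_cast [hg]; rfl
  have hχg : χ g = (inner ℂ η η : ℂ) := by
    have h1 : χ g = ∑ i, ∑ j, (conj (η i) * ξ j) * A i j := by
      rw [hg, map_sum]
      refine Finset.sum_congr rfl fun i _ => ?_
      rw [map_sum]
      refine Finset.sum_congr rfl fun j _ => ?_
      have hls := map_smul χ.toLinearMap (conj (η i) * ξ j) (N i j)
      simp only [AlgHom.toLinearMap_apply, smul_eq_mul] at hls
      rw [hls, hA]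
      rfl
    rw [h1, ← inner_toEuclideanCLM A η ξ, ← hη]
  have hnorm : ‖η‖ ^ 2 = ‖χ g‖ := by
    rw [hχg, inner_self_eq_norm_sq_to_K]
    simp [norm_pow, Complex.norm_real, abs_norm]
  have hsq : ‖η‖ ^ 2 ≤ C * ‖ξ‖ * ‖η‖ := by
    rw [hnorm]
    refine (hχle g).trans ?_
    have hgn : ‖g‖ = ‖(g : C(X, ℂ))‖ := rfl
    rw [hgn]
    refine (ContinuousMap.norm_le _ (by positivity)).mpr fun y => ?_
    have hval : (g : C(X, ℂ)) y = ∑ i, ∑ j, (conj (η i) * ξ j) * ((N i j : C(X, ℂ)) y) := by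
      rw [hgval]; simp
    have hin := inner_toEuclideanCLM (Matrix.of fun i j => (N i j : C(X, ℂ)) y) η ξ
    simp only [Matrix.of_apply] at hin
    rw [hval, ← hin]
    calc ‖(inner ℂ η (Matrix.toEuclideanCLM (𝕜 := ℂ)
            (Matrix.of fun i j => (N i j : C(X, ℂ)) y) ξ) : ℂ)‖
        ≤ ‖η‖ * ‖Matrix.toEuclideanCLM (𝕜 := ℂ)
            (Matrix.of fun i j => (N i j : C(X, ℂ)) y) ξ‖ := norm_inner_le_norm _ _
      _ ≤ ‖η‖ * (‖Matrix.toEuclideanCLM (𝕜 := ℂ)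
            (Matrix.of fun i j => (N i j : C(X, ℂ)) y)‖ * ‖ξ‖) :=
          mul_le_mul_of_nonneg_left (ContinuousLinearMap.le_opNorm _ _) (norm_nonneg _)
      _ ≤ ‖η‖ * (C * ‖ξ‖) := by
          exact mul_le_mul_of_nonneg_left
            (mul_le_mul_of_nonneg_right (hpt y) (norm_nonneg _)) (norm_nonneg _)
      _ = C * ‖ξ‖ * ‖η‖ := by ring
  have hfin : ‖η‖ ≤ C * ‖ξ‖ := by
    rcases eq_or_ne ‖η‖ 0 with h0 | h0
    · rw [h0]; positivity
    · have hpos : 0 < ‖η‖ := lt_of_le_of_ne (norm_nonneg _) (Ne.symm h0)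
      have h2 := hsq
      rw [pow_two] at h2
      exact le_of_mul_le_mul_right h2 hpos
  exact hfin

/-- Evaluation at a point as a character. -/
noncomputable def evalChar {X : Type*} [TopologicalSpace X] (F : Subalgebra ℂ C(X, ℂ)) (x : X) :
    F →ₐ[ℂ] ℂ where
  toFun f := (f : C(X, ℂ)) x
  map_one' := rfl
  map_mul' _ _ := rfl
  map_zero' := rfl
  map_add' _ _ := rfl
  commutes' _ := rfl

lemma cMatNorm_equiv_le {X Y : Type*} [TopologicalSpace X] [CompactSpace X]
    [TopologicalSpace Y]
    {F : Subalgebra ℂ C(X, ℂ)} {G : Subalgebra ℂ C(Y, ℂ)} (hF : IsClosed (F : Set C(X, ℂ)))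
    (θ : F ≃ₐ[ℂ] G) {d : ℕ} (N : Matrix (Fin d) (Fin d) F) :
    cMatNorm (fun i j => (θ (N i j) : C(Y, ℂ))) ≤ cMatNorm (fun i j => (N i j : C(X, ℂ))) := by
  refine Real.iSup_le (fun y => ?_) (Real.iSup_nonneg fun _ => norm_nonneg _)
  exact char_matrix_norm_le hF (((evalChar G y)).comp θ.toAlgHom) N

lemma cMatNorm_equiv_eq {X Y : Type*} [TopologicalSpace X] [CompactSpace X]
    [TopologicalSpace Y] [CompactSpace Y]
    {F : Subalgebra ℂ C(X, ℂ)} {G : Subalgebra ℂ C(Y, ℂ)}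
    (hF : IsClosed (F : Set C(X, ℂ))) (hG : IsClosed (G : Set C(Y, ℂ)))
    (θ : F ≃ₐ[ℂ] G) {d : ℕ} (N : Matrix (Fin d) (Fin d) F) :
    cMatNorm (fun i j => (θ (N i j) : C(Y, ℂ))) = cMatNorm (fun i j => (N i j : C(X, ℂ))) := by
  refine le_antisymm (cMatNorm_equiv_le hF θ N) ?_
  have := cMatNorm_equiv_le hG θ.symm (fun i j => θ (N i j))
  simpa only [AlgEquiv.symm_apply_apply] using this

end Aux

/-- If `A ⊆ B(H₁)` and `B ⊆ B(H₂)` are unital operator algebras which are completely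
isometrically isomorphic to uniform algebras, then every unital completely bounded
isomorphism `φ : A → B` is completely isometric. -/
theorem stmt8
    {H₁ H₂ : Type*}
    [NormedAddCommGroup H₁] [InnerProductSpace ℂ H₁] [CompleteSpace H₁]
    [NormedAddCommGroup H₂] [InnerProductSpace ℂ H₂] [CompleteSpace H₂]
    (A : Subalgebra ℂ (H₁ →L[ℂ] H₁)) (B : Subalgebra ℂ (H₂ →L[ℂ] H₂))
    (U₁ : UniformAlgebraPkg.{u}) (ψ₁ : U₁.F ≃ₐ[ℂ] A)
    (hψ₁ : ∀ (d : ℕ) (M : Matrix (Fin d) (Fin d) U₁.F),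
      matOpNorm (fun i j => (ψ₁ (M i j) : H₁ →L[ℂ] H₁)) =
        cMatNorm (fun i j => (M i j : C(U₁.carrier, ℂ))))
    (U₂ : UniformAlgebraPkg.{v}) (ψ₂ : U₂.F ≃ₐ[ℂ] B)
    (hψ₂ : ∀ (d : ℕ) (M : Matrix (Fin d) (Fin d) U₂.F),
      matOpNorm (fun i j => (ψ₂ (M i j) : H₂ →L[ℂ] H₂)) =
        cMatNorm (fun i j => (M i j : C(U₂.carrier, ℂ))))
    (φ : A ≃ₐ[ℂ] B)
    (hφ : CompletelyBounded (fun a : A => (a : H₁ →L[ℂ] H₁))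
      (fun a : A => (φ a : H₂ →L[ℂ] H₂)))
    (hφinv : CompletelyBounded (fun b : B => (b : H₂ →L[ℂ] H₂))
      (fun b : B => (φ.symm b : H₁ →L[ℂ] H₁))) :
    ∀ (d : ℕ) (M : Matrix (Fin d) (Fin d) A),
      matOpNorm (fun i j => (φ (M i j) : H₂ →L[ℂ] H₂)) =
        matOpNorm (fun i j => (M i j : H₁ →L[ℂ] H₁)) := by
  intro d M
  have h1 := hψ₁ d (fun i j => ψ₁.symm (M i j))
  have h2 := hψ₂ d (fun i j => ψ₂.symm (φ (M i j)))
  simp only [AlgEquiv.apply_symm_apply] at h1 h2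
  rw [h1, h2]
  have key := cMatNorm_equiv_eq U₁.closed U₂.closed
    (ψ₁.trans (φ.trans ψ₂.symm)) (fun i j => ψ₁.symm (M i j))
  simp only [AlgEquiv.trans_apply, AlgEquiv.apply_symm_apply] at key
  exact key
end

section
/- Let α, β, γ, α', β', γ', δ' be complex numbers such that ‖[[αz₁, βz₁+γz₂],[0,0]]‖ = ‖[[α'z₁, β'z₁+γ'z₂],[0, δ'z₂]]‖ for every z₁, z₂ ∈ ℂ. Then |γ|² = |γ'|² + |δ'|², |α|² + |β|² = |α'|² + |β'|², and |β||γ| ≤ |β'||γ'|; moreover, if |β||γ| = |β'||γ'| then α'δ' = 0. -/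
set_option maxHeartbeats 1000000

/-- The operator norm of a 2×2 complex matrix acting on `ℂ²` with the Euclidean norm. -/
noncomputable def opNorm2 (M : Matrix (Fin 2) (Fin 2) ℂ) : ℝ :=
  ‖Matrix.toEuclideanCLM (𝕜 := ℂ) M‖

lemma apply_norm_sq (a b c d : ℂ) (x : EuclideanSpace ℂ (Fin 2)) :
    ‖Matrix.toEuclideanCLM (𝕜 := ℂ) !![a, b; c, d] x‖ ^ 2
      = Complex.normSq (a * (WithLp.equiv 2 (Fin 2 → ℂ) x) 0 + b * (WithLp.equiv 2 (Fin 2 → ℂ) x) 1)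
        + Complex.normSq (c * (WithLp.equiv 2 (Fin 2 → ℂ) x) 0 + d * (WithLp.equiv 2 (Fin 2 → ℂ) x) 1) := by
  have hx : x = (WithLp.equiv 2 (Fin 2 → ℂ)).symm (WithLp.equiv 2 (Fin 2 → ℂ) x) := rfl
  rw [hx, WithLp.equiv_symm_apply, Matrix.toEuclideanCLM_toLp, EuclideanSpace.norm_eq,
    Real.sq_sqrt (by positivity)]
  simp [Matrix.toLin'_apply, Matrix.mulVec, dotProduct, Fin.sum_univ_two,
    Complex.sq_norm]

lemma vec_norm_sq (x : EuclideanSpace ℂ (Fin 2)) :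
    ‖x‖ ^ 2 = Complex.normSq ((WithLp.equiv 2 (Fin 2 → ℂ) x) 0)
      + Complex.normSq ((WithLp.equiv 2 (Fin 2 → ℂ) x) 1) := by
  rw [EuclideanSpace.norm_eq, Real.sq_sqrt (by positivity)]
  simp [Fin.sum_univ_two, Complex.sq_norm]

lemma master (a b d : ℂ) :
    opNorm2 !![a, b; 0, d] ^ 2 *
        ((Complex.normSq a + Complex.normSq b + Complex.normSq d) - opNorm2 !![a, b; 0, d] ^ 2)
      = Complex.normSq a * Complex.normSq d ∧
    Complex.normSq a + Complex.normSq b + Complex.normSq d ≤ 2 * opNorm2 !![a, b; 0, d] ^ 2 := by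
  set p := Complex.normSq a with hp
  set B2 := Complex.normSq b with hB2
  set D2 := Complex.normSq d with hD2
  have hp0 : 0 ≤ p := Complex.normSq_nonneg a
  have hB0 : 0 ≤ B2 := Complex.normSq_nonneg b
  have hD0 : 0 ≤ D2 := Complex.normSq_nonneg d
  set r := B2 + D2 with hr
  set s := Real.sqrt ((p - r) ^ 2 + 4 * p * B2) with hs
  have hs0 : 0 ≤ s := Real.sqrt_nonneg _
  have hs2 : s ^ 2 = (p - r) ^ 2 + 4 * p * B2 := Real.sq_sqrt (by positivity)
  have hspr : |p - r| ≤ s := by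
    rw [hs, ← Real.sqrt_sq_eq_abs]
    exact Real.sqrt_le_sqrt (by nlinarith)
  set lam := (p + r + s) / 2 with hlam
  have hlp : p ≤ lam := by
    rcases abs_le.mp hspr with ⟨h1, h2⟩; rw [hlam]; linarith
  have hlr : r ≤ lam := by
    rcases abs_le.mp hspr with ⟨h1, h2⟩; rw [hlam]; linarith
  have hlam0 : 0 ≤ lam := le_trans hp0 hlp
  have hchar : (lam - p) * (lam - r) = p * B2 := by
    rw [hlam]; nlinarith [hs2]
  -- upper bound
  have hub : opNorm2 !![a, b; 0, d] ≤ Real.sqrt lam := by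
    apply ContinuousLinearMap.opNorm_le_bound _ (Real.sqrt_nonneg _)
    intro x
    have key : ‖Matrix.toEuclideanCLM (𝕜 := ℂ) !![a, b; 0, d] x‖ ^ 2 ≤ lam * ‖x‖ ^ 2 := by
      rw [apply_norm_sq, vec_norm_sq]
      set x0 := (WithLp.equiv 2 (Fin 2 → ℂ) x) 0
      set x1 := (WithLp.equiv 2 (Fin 2 → ℂ) x) 1
      have e1 : Complex.normSq (a * x0 + b * x1)
          ≤ (‖a‖ * ‖x0‖ + ‖b‖ * ‖x1‖) ^ 2 := by
        rw [← Complex.sq_norm]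
        have := norm_add_le (a * x0) (b * x1)
        have h2 : ‖a * x0 + b * x1‖ ≤
            ‖a‖ * ‖x0‖ + ‖b‖ * ‖x1‖ := by
          simpa [norm_mul] using this
        exact pow_le_pow_left₀ (norm_nonneg _) h2 2
      have e2 : Complex.normSq (0 * x0 + d * x1) = D2 * ‖x1‖ ^ 2 := by
        simp [Complex.normSq_mul, hD2, Complex.sq_norm]
      have hX : Complex.normSq x0 = ‖x0‖ ^ 2 := (Complex.sq_norm _).symm
      have hY : Complex.normSq x1 = ‖x1‖ ^ 2 := (Complex.sq_norm _).symm
      rw [e2, hX, hY]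
      set X := ‖x0‖
      set Y := ‖x1‖
      have hX0 : 0 ≤ X := norm_nonneg _
      have hY0 : 0 ≤ Y := norm_nonneg _
      have hpa : ‖a‖ ^ 2 = p := Complex.sq_norm a
      have hpb : ‖b‖ ^ 2 = B2 := Complex.sq_norm b
      set kk := ‖a‖ * ‖b‖ with hkk
      have hkk0 : 0 ≤ kk := mul_nonneg (norm_nonneg a) (norm_nonneg b)
      have hkk2 : kk ^ 2 = (lam - p) * (lam - r) := by
        rw [hkk, mul_pow, hpa, hpb, hchar]
      have key2 : 2 * kk * (X * Y) ≤ (lam - p) * X ^ 2 + (lam - r) * Y ^ 2 := by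
        rcases eq_or_lt_of_le (sub_nonneg.mpr hlp) with hz | hpos
        · have : kk = 0 := by
            have : kk ^ 2 = 0 := by rw [hkk2, ← hz]; ring
            exact pow_eq_zero_iff (by norm_num) |>.mp this
          rw [this]
          have : 0 ≤ (lam - r) * Y ^ 2 := mul_nonneg (sub_nonneg.mpr hlr) (sq_nonneg _)
          nlinarith [sq_nonneg X, sub_nonneg.mpr hlp]
        · have h2 : (lam - p) * ((lam - p) * X ^ 2 + (lam - r) * Y ^ 2 - 2 * kk * (X * Y))
              = ((lam - p) * X - kk * Y) ^ 2 := by linear_combination (-(Y ^ 2)) * hkk2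
          have h3 : 0 ≤ (lam - p) * ((lam - p) * X ^ 2 + (lam - r) * Y ^ 2 - 2 * kk * (X * Y)) :=
            h2 ▸ sq_nonneg _
          nlinarith [h3, hpos]
      calc Complex.normSq (a * x0 + b * x1) + D2 * Y ^ 2
          ≤ (‖a‖ * X + ‖b‖ * Y) ^ 2 + D2 * Y ^ 2 := by linarith
        _ ≤ lam * (X ^ 2 + Y ^ 2) := by
            have expand : (‖a‖ * X + ‖b‖ * Y) ^ 2
                = p * X ^ 2 + 2 * kk * (X * Y) + B2 * Y ^ 2 := by
              rw [hkk]; linear_combination (X ^ 2) * hpa + (Y ^ 2) * hpb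
            rw [expand, hr] at *
            linarith [key2]
    have h1 : ‖Matrix.toEuclideanCLM (𝕜 := ℂ) !![a, b; 0, d] x‖
        = Real.sqrt (‖Matrix.toEuclideanCLM (𝕜 := ℂ) !![a, b; 0, d] x‖ ^ 2) := by
      rw [Real.sqrt_sq (norm_nonneg _)]
    rw [h1]
    calc Real.sqrt (‖Matrix.toEuclideanCLM (𝕜 := ℂ) !![a, b; 0, d] x‖ ^ 2)
        ≤ Real.sqrt (lam * ‖x‖ ^ 2) := Real.sqrt_le_sqrt key
      _ = Real.sqrt lam * ‖x‖ := by
          rw [Real.sqrt_mul hlam0, Real.sqrt_sq (norm_nonneg _)]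
  have hlb : Real.sqrt lam ≤ opNorm2 !![a, b; 0, d] := by
    have lb_of : ∀ x : EuclideanSpace ℂ (Fin 2), x ≠ 0 →
        ‖Matrix.toEuclideanCLM (𝕜 := ℂ) !![a, b; 0, d] x‖ ^ 2 = lam * ‖x‖ ^ 2 →
        Real.sqrt lam ≤ opNorm2 !![a, b; 0, d] := by
      intro x hx hfx
      have hxn : 0 < ‖x‖ := norm_pos_iff.mpr hx
      have h1 := (Matrix.toEuclideanCLM (𝕜 := ℂ) !![a, b; 0, d]).le_opNorm x
      have h2 : lam * ‖x‖ ^ 2 ≤ opNorm2 !![a, b; 0, d] ^ 2 * ‖x‖ ^ 2 := by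
        rw [← hfx]
        calc ‖Matrix.toEuclideanCLM (𝕜 := ℂ) !![a, b; 0, d] x‖ ^ 2
            ≤ (opNorm2 !![a, b; 0, d] * ‖x‖) ^ 2 := by
              apply pow_le_pow_left₀ (norm_nonneg _) h1
          _ = opNorm2 !![a, b; 0, d] ^ 2 * ‖x‖ ^ 2 := by ring
      have hxx : (0:ℝ) < ‖x‖ ^ 2 := by positivity
      have h3 : lam ≤ opNorm2 !![a, b; 0, d] ^ 2 := (mul_le_mul_iff_of_pos_right hxx).mp h2
      calc Real.sqrt lam ≤ Real.sqrt (opNorm2 !![a, b; 0, d] ^ 2) := Real.sqrt_le_sqrt h3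
        _ = opNorm2 !![a, b; 0, d] := Real.sqrt_sq (norm_nonneg _)
    by_cases hdeg : (starRingEnd ℂ) a * b = 0 ∧ lam = p
    · -- use e₁
      apply lb_of ((WithLp.equiv 2 (Fin 2 → ℂ)).symm ![1, 0])
      · intro hx
        have h0 : (![1, 0] : Fin 2 → ℂ) 0 = 0 := by
          have := congrArg (fun v => (WithLp.equiv 2 (Fin 2 → ℂ)) v 0) hx
          simpa using this
        simp at h0
      · rw [apply_norm_sq, vec_norm_sq]
        simp [hdeg.2]
        exact hp.symm
    · -- eigenvector
      set q : ℂ := (starRingEnd ℂ) a * b with hq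
      apply lb_of ((WithLp.equiv 2 (Fin 2 → ℂ)).symm ![q, ((lam - p : ℝ) : ℂ)])
      · intro hx
        apply hdeg
        have h0 := congrArg (fun v => (WithLp.equiv 2 (Fin 2 → ℂ)) v 0) hx
        have h1 := congrArg (fun v => (WithLp.equiv 2 (Fin 2 → ℂ)) v 1) hx
        simp at h0 h1
        have h1' : (lam : ℂ) = (p : ℂ) := sub_eq_zero.mp h1
        exact ⟨h0, Complex.ofReal_inj.mp h1'⟩
      · rw [apply_norm_sq, vec_norm_sq]
        have hc0 : (WithLp.equiv 2 (Fin 2 → ℂ)) ((WithLp.equiv 2 (Fin 2 → ℂ)).symm ![q, ((lam - p : ℝ) : ℂ)]) = ![q, ((lam - p : ℝ) : ℂ)] := by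
          simp
        rw [hc0]
        have hv0 : (![q, ((lam - p : ℝ) : ℂ)] : Fin 2 → ℂ) 0 = q := rfl
        have hv1 : (![q, ((lam - p : ℝ) : ℂ)] : Fin 2 → ℂ) 1 = ((lam - p : ℝ) : ℂ) := rfl
        rw [hv0, hv1]
        have hmc : a * (starRingEnd ℂ) a = ((p : ℝ) : ℂ) := by
          rw [hp]; exact Complex.mul_conj a
        have key3 : a * q + b * ((lam - p : ℝ) : ℂ) = b * ((lam : ℝ) : ℂ) := by
          rw [hq]; push_cast; linear_combination b * hmc
        rw [key3]
        have e1 : Complex.normSq (b * ((lam : ℝ) : ℂ)) = B2 * lam ^ 2 := by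
          rw [Complex.normSq_mul, Complex.normSq_ofReal, hB2]; ring
        have e2 : Complex.normSq (0 * q + d * ((lam - p : ℝ) : ℂ)) = D2 * (lam - p) ^ 2 := by
          rw [zero_mul, zero_add, Complex.normSq_mul, Complex.normSq_ofReal, hD2]; ring
        have e3 : Complex.normSq q = p * B2 := by
          rw [hq, Complex.normSq_mul, Complex.normSq_conj, hp, hB2]
        have e4 : Complex.normSq ((lam - p : ℝ) : ℂ) = (lam - p) ^ 2 := by
          rw [Complex.normSq_ofReal]; ring
        rw [e1, e2, e3, e4]
        linear_combination (p - lam) * hchar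
  have hN : opNorm2 !![a, b; 0, d] = Real.sqrt lam := le_antisymm hub hlb
  have hN2 : opNorm2 !![a, b; 0, d] ^ 2 = lam := by
    rw [hN, Real.sq_sqrt hlam0]
  rw [hN2]
  rw [hr] at hchar
  constructor
  · linear_combination (-1 : ℝ) * hchar
  · rw [hlam]; linarith [hs0]


lemma deg_sq (a b d : ℂ) (h0 : Complex.normSq a * Complex.normSq d = 0) :
    opNorm2 !![a, b; 0, d] ^ 2 = Complex.normSq a + Complex.normSq b + Complex.normSq d := by
  obtain ⟨h1, h2⟩ := master a b d
  rw [h0] at h1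
  rcases mul_eq_zero.mp h1 with hL | hT
  · rw [hL] at h2 ⊢
    have := Complex.normSq_nonneg a
    have := Complex.normSq_nonneg b
    have := Complex.normSq_nonneg d
    linarith
  · linarith

lemma row_sq (a b : ℂ) :
    opNorm2 !![a, b; 0, 0] ^ 2 = Complex.normSq a + Complex.normSq b := by
  have := deg_sq a b 0 (by simp)
  simpa using this

/-- **Lemma 3.1**. -/
theorem stmt9 (α β γ α' β' γ' δ' : ℂ)
    (h : ∀ z₁ z₂ : ℂ,
      opNorm2 !![α * z₁, β * z₁ + γ * z₂; 0, 0] =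
        opNorm2 !![α' * z₁, β' * z₁ + γ' * z₂; 0, δ' * z₂]) :
    ‖γ‖ ^ 2 = ‖γ'‖ ^ 2 + ‖δ'‖ ^ 2 ∧
    ‖α‖ ^ 2 + ‖β‖ ^ 2 = ‖α'‖ ^ 2 + ‖β'‖ ^ 2 ∧
    ‖β‖ * ‖γ‖ ≤ ‖β'‖ * ‖γ'‖ ∧
    (‖β‖ * ‖γ‖ = ‖β'‖ * ‖γ'‖ → α' * δ' = 0) := by
  -- Part 1
  have e1 : Complex.normSq γ = Complex.normSq γ' + Complex.normSq δ' := by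
    have h01 := congrArg (· ^ 2) (h 0 1)
    simp only [mul_zero, mul_one, zero_add] at h01
    rw [row_sq, deg_sq 0 γ' δ' (by simp)] at h01
    simpa using h01
  -- Part 2
  have e2 : Complex.normSq α + Complex.normSq β = Complex.normSq α' + Complex.normSq β' := by
    have h10 := congrArg (· ^ 2) (h 1 0)
    simp only [mul_zero, mul_one, add_zero] at h10
    rw [row_sq, deg_sq α' β' 0 (by simp)] at h10
    simpa using h10
  -- key identity for unit w
  have key : ∀ w : ℂ, Complex.normSq w = 1 →
      (Complex.normSq α + Complex.normSq (β + γ * w)) *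
        ((Complex.normSq α' + Complex.normSq (β' + γ' * w) + Complex.normSq δ')
          - (Complex.normSq α + Complex.normSq (β + γ * w)))
        = Complex.normSq α' * Complex.normSq δ' := by
    intro w hw
    have hh := congrArg (· ^ 2) (h 1 w)
    simp only [mul_one] at hh
    have hM := (master (α' * 1) (β' * 1 + γ' * w) (δ' * w)).1
    simp only [mul_one] at hM
    rw [← hh, row_sq] at hM
    rw [Complex.normSq_mul δ' w, hw, mul_one] at hM
    convert hM using 3 <;> simp
  set u : ℂ := β * (starRingEnd ℂ) γ with hu
  set u' : ℂ := β' * (starRingEnd ℂ) γ' with hu'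
  set S : ℝ := Complex.normSq α + Complex.normSq β + Complex.normSq γ with hS
  have hexp : ∀ (b₀ g₀ w : ℂ), Complex.normSq w = 1 →
      Complex.normSq (b₀ + g₀ * w)
        = Complex.normSq b₀ + Complex.normSq g₀ + 2 * ((b₀ * (starRingEnd ℂ) g₀) * (starRingEnd ℂ) w).re := by
    intro b₀ g₀ w hw
    rw [Complex.normSq_add, Complex.normSq_mul, hw, mul_one, map_mul, ← mul_assoc]
  have hK : ∀ w : ℂ, Complex.normSq w = 1 →
      (S + 2 * (u * (starRingEnd ℂ) w).re) * (2 * ((u' - u) * (starRingEnd ℂ) w).re)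
        = Complex.normSq α' * Complex.normSq δ' := by
    intro w hw
    have hk := key w hw
    rw [hexp β γ w hw, hexp β' γ' w hw] at hk
    have hre : ((u' - u) * (starRingEnd ℂ) w).re
        = (u' * (starRingEnd ℂ) w).re - (u * (starRingEnd ℂ) w).re := by
      rw [sub_mul, Complex.sub_re]
    rw [← hu, ← hu'] at hk
    rw [hre, hS]
    linear_combination hk + ((Complex.normSq α + Complex.normSq β + Complex.normSq γ)
        + 2 * (u * (starRingEnd ℂ) w).re) * e2
      + ((Complex.normSq α + Complex.normSq β + Complex.normSq γ)
        + 2 * (u * (starRingEnd ℂ) w).re) * e1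
  have K1 := hK 1 (by simp)
  have Km1 := hK (-1) (by simp)
  have KI := hK Complex.I (by simp)
  have KmI := hK (-Complex.I) (by simp)
  simp only [map_one, mul_one, map_neg, mul_neg, Complex.neg_re, Complex.mul_re,
    Complex.conj_re, Complex.conj_im, Complex.I_re, Complex.I_im, Complex.sub_re,
    Complex.sub_im, Complex.one_re, Complex.one_im] at K1 Km1 KI KmI
  have hc0 : 0 ≤ Complex.normSq α' * Complex.normSq δ' :=
    mul_nonneg (Complex.normSq_nonneg _) (Complex.normSq_nonneg _)
  have habs1 : ‖γ‖ ^ 2 = ‖γ'‖ ^ 2 + ‖δ'‖ ^ 2 := by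
    rw [Complex.sq_norm, Complex.sq_norm, Complex.sq_norm]; exact e1
  have habs2 : ‖α‖ ^ 2 + ‖β‖ ^ 2 = ‖α'‖ ^ 2 + ‖β'‖ ^ 2 := by
    rw [Complex.sq_norm, Complex.sq_norm, Complex.sq_norm, Complex.sq_norm]; exact e2
  -- combine
  have hSre : S * (u'.re - u.re) = 0 := by linear_combination (1/4 : ℝ) * K1 - (1/4 : ℝ) * Km1
  have hSim : S * (u'.im - u.im) = 0 := by linear_combination (1/4 : ℝ) * KI - (1/4 : ℝ) * KmI
  rcases eq_or_lt_of_le (by rw [hS]; have := Complex.normSq_nonneg α; have := Complex.normSq_nonneg β; have := Complex.normSq_nonneg γ; linarith : (0:ℝ) ≤ S) with hS0 | hS0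
  · -- S = 0 : α = β = γ = 0 and then all primed vanish
    have hna : Complex.normSq α = 0 := by
      have := Complex.normSq_nonneg α; have := Complex.normSq_nonneg β
      have := Complex.normSq_nonneg γ; rw [hS] at hS0; linarith
    have hnb : Complex.normSq β = 0 := by
      have := Complex.normSq_nonneg α; have := Complex.normSq_nonneg β
      have := Complex.normSq_nonneg γ; rw [hS] at hS0; linarith
    have hng : Complex.normSq γ = 0 := by
      have := Complex.normSq_nonneg α; have := Complex.normSq_nonneg β
      have := Complex.normSq_nonneg γ; rw [hS] at hS0; linarith
    have hnd' : Complex.normSq δ' = 0 := by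
      have := Complex.normSq_nonneg γ'; have := Complex.normSq_nonneg δ'; linarith [e1, hng]
    have hng' : Complex.normSq γ' = 0 := by
      have := Complex.normSq_nonneg γ'; have := Complex.normSq_nonneg δ'; linarith [e1, hng]
    have hb : β = 0 := Complex.normSq_eq_zero.mp hnb
    have hd' : δ' = 0 := Complex.normSq_eq_zero.mp hnd'
    refine ⟨habs1, habs2, ?_, fun _ => by rw [hd', mul_zero]⟩
    rw [hb]
    simp [mul_nonneg (norm_nonneg _) (norm_nonneg _)]
  · -- S > 0 : u' = u
    have hre0 : u'.re = u.re := by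
      rcases mul_eq_zero.mp hSre with h0 | h0
      · exact absurd h0.symm (ne_of_lt hS0)
      · linarith
    have him0 : u'.im = u.im := by
      rcases mul_eq_zero.mp hSim with h0 | h0
      · exact absurd h0.symm (ne_of_lt hS0)
      · linarith
    have huu : u' = u := Complex.ext hre0 him0
    have habs3 : ‖β‖ * ‖γ‖ = ‖β'‖ * ‖γ'‖ := by
      have h1 : ‖u‖ = ‖β‖ * ‖γ‖ := by
        rw [hu, norm_mul, Complex.norm_conj]
      have h2 : ‖u'‖ = ‖β'‖ * ‖γ'‖ := by
        rw [hu', norm_mul, Complex.norm_conj]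
      rw [← h1, ← h2, huu]
    have hc : Complex.normSq α' * Complex.normSq δ' = 0 := by
      rw [← K1, hre0]; ring
    have had : α' * δ' = 0 := by
      have : Complex.normSq (α' * δ') = 0 := by rw [Complex.normSq_mul]; exact hc
      exact Complex.normSq_eq_zero.mp this
    exact ⟨habs1, habs2, le_of_eq habs3, fun _ => had⟩
end

section
/- Let α, β, γ, α', β', γ', δ' be complex numbers with γ' ≠ 0 such that ‖[[αz₁, βz₁+γz₂],[0,0]]‖ = ‖[[α'z₁, β'z₁+γ'z₂],[0, δ'z₂]]‖ for every z₁, z₂ ∈ ℂ. Then α'δ' = 0. -/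
open Complex Matrix

noncomputable def vec2 (x y : ℂ) : EuclideanSpace ℂ (Fin 2) :=
  (WithLp.equiv 2 (Fin 2 → ℂ)).symm ![x, y]

lemma norm_vec2_sq (x y : ℂ) : ‖vec2 x y‖ ^ 2 = normSq x + normSq y := by
  rw [vec2, EuclideanSpace.norm_eq]
  rw [Real.sq_sqrt (by positivity)]
  simp [Fin.sum_univ_two, Complex.sq_norm]

lemma apply_vec2 (M : Matrix (Fin 2) (Fin 2) ℂ) (x y : ℂ) :
    Matrix.toEuclideanCLM (𝕜 := ℂ) M (vec2 x y) =
      vec2 (M 0 0 * x + M 0 1 * y) (M 1 0 * x + M 1 1 * y) := by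
  rw [vec2, WithLp.equiv_symm_apply, Matrix.toEuclideanCLM_toLp]
  congr 1
  funext i
  fin_cases i <;> simp [Matrix.toLin'_apply, Matrix.mulVec, dotProduct,
    Fin.sum_univ_two, vec2]

lemma vec2_eta (v : EuclideanSpace ℂ (Fin 2)) : vec2 (v 0) (v 1) = v := by
  ext i
  fin_cases i <;> rfl

lemma cs (a b x y : ℂ) :
    normSq (a*x + b*y) ≤ (normSq a + normSq b) * (normSq x + normSq y) := by
  have h1 : ‖a*x + b*y‖ ≤
      ‖a‖ * ‖x‖ + ‖b‖ * ‖y‖ := by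
    calc ‖a*x + b*y‖ ≤ ‖a*x‖ + ‖b*y‖ :=
          norm_add_le _ _
    _ = _ := by simp [norm_mul]
  have h2 : normSq (a*x+b*y) = ‖a*x+b*y‖ ^ 2 := (Complex.sq_norm _).symm
  have e : ∀ z : ℂ, normSq z = ‖z‖ ^ 2 := fun z => (Complex.sq_norm z).symm
  rw [h2, e a, e b, e x, e y]
  have h0 : (0:ℝ) ≤ ‖a*x+b*y‖ := (norm_nonneg _)
  nlinarith [sq_nonneg (‖a‖ * ‖y‖ - ‖b‖ * ‖x‖),
    norm_nonneg a, norm_nonneg b, norm_nonneg x, norm_nonneg y]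

lemma norm_apply_sq (M : Matrix (Fin 2) (Fin 2) ℂ) (x y : ℂ) :
    ‖Matrix.toEuclideanCLM (𝕜 := ℂ) M (vec2 x y)‖ ^ 2 =
      normSq (M 0 0 * x + M 0 1 * y) + normSq (M 1 0 * x + M 1 1 * y) := by
  rw [apply_vec2, norm_vec2_sq]

lemma opNorm2_sq_lower (M : Matrix (Fin 2) (Fin 2) ℂ) (x y : ℂ) :
    normSq (M 0 0 * x + M 0 1 * y) + normSq (M 1 0 * x + M 1 1 * y) ≤
      opNorm2 M ^ 2 * (normSq x + normSq y) := by
  have h := (Matrix.toEuclideanCLM (𝕜 := ℂ) M).le_opNorm (vec2 x y)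
  have h2 : ‖Matrix.toEuclideanCLM (𝕜 := ℂ) M (vec2 x y)‖ ^ 2 ≤
      (‖Matrix.toEuclideanCLM (𝕜 := ℂ) M‖ * ‖vec2 x y‖) ^ 2 :=
    pow_le_pow_left₀ (norm_nonneg _) h 2
  rw [norm_apply_sq] at h2
  calc _ ≤ (‖Matrix.toEuclideanCLM (𝕜 := ℂ) M‖ * ‖vec2 x y‖) ^ 2 := h2
  _ = _ := by rw [mul_pow, norm_vec2_sq]; rfl

lemma opNorm2_sq_upper (M : Matrix (Fin 2) (Fin 2) ℂ) :
    opNorm2 M ^ 2 ≤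
      normSq (M 0 0) + normSq (M 0 1) + (normSq (M 1 0) + normSq (M 1 1)) := by
  set S := normSq (M 0 0) + normSq (M 0 1) + (normSq (M 1 0) + normSq (M 1 1)) with hS
  have hS0 : 0 ≤ S := by
    have := normSq_nonneg (M 0 0); have := normSq_nonneg (M 0 1)
    have := normSq_nonneg (M 1 0); have := normSq_nonneg (M 1 1); linarith
  have hb : ‖Matrix.toEuclideanCLM (𝕜 := ℂ) M‖ ≤ Real.sqrt S := by
    apply ContinuousLinearMap.opNorm_le_bound _ (Real.sqrt_nonneg _)
    intro v
    rw [← vec2_eta v]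
    have hnv : ‖Matrix.toEuclideanCLM (𝕜 := ℂ) M (vec2 (v 0) (v 1))‖ ^ 2 ≤
        S * ‖vec2 (v 0) (v 1)‖^2 := by
      rw [norm_apply_sq, norm_vec2_sq]
      have := cs (M 0 0) (M 0 1) (v 0) (v 1)
      have := cs (M 1 0) (M 1 1) (v 0) (v 1)
      nlinarith [normSq_nonneg (v 0), normSq_nonneg (v 1)]
    have := Real.sqrt_le_sqrt hnv
    rwa [Real.sqrt_sq (norm_nonneg _), Real.sqrt_mul hS0, Real.sqrt_sq (norm_nonneg _)] at this
  calc opNorm2 M ^ 2 ≤ Real.sqrt S ^ 2 := pow_le_pow_left₀ (norm_nonneg _) hb 2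
  _ = S := Real.sq_sqrt hS0

lemma opNorm2_row (a b : ℂ) : opNorm2 !![a,b;0,0] ^ 2 = normSq a + normSq b := by
  have hu := opNorm2_sq_upper !![a,b;0,0]
  have hl := opNorm2_sq_lower !![a,b;0,0] (starRingEnd ℂ a) (starRingEnd ℂ b)
  simp only [Matrix.cons_val', Matrix.cons_val_zero, Matrix.cons_val_one, Matrix.head_cons,
    Matrix.empty_val', Matrix.cons_val_fin_one, Matrix.head_fin_const, Matrix.of_apply] at hu hl
  rw [show a * starRingEnd ℂ a + b * starRingEnd ℂ b = ((normSq a + normSq b : ℝ) : ℂ) by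
    rw [Complex.mul_conj, Complex.mul_conj]; push_cast; ring] at hl
  simp only [normSq_zero, zero_mul, add_zero, zero_add, Complex.normSq_ofReal,
    Complex.normSq_conj] at hl hu
  set s := normSq a + normSq b with hs
  have hs0 : 0 ≤ s := by have := normSq_nonneg a; have := normSq_nonneg b; linarith
  rcases eq_or_lt_of_le hs0 with h0 | h0
  · nlinarith [sq_nonneg (opNorm2 !![a,b;0,0])]
  · have h1 : s * s ≤ opNorm2 !![a,b;0,0] ^ 2 * s := by
      have := normSq_nonneg ((0:ℂ) * starRingEnd ℂ a + 0 * starRingEnd ℂ b)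
      nlinarith
    have h2 : s ≤ opNorm2 !![a,b;0,0] ^ 2 := le_of_mul_le_mul_right h1 h0
    linarith

lemma opNorm2_col (b d : ℂ) : opNorm2 !![0,b;0,d] ^ 2 = normSq b + normSq d := by
  have hu := opNorm2_sq_upper !![0,b;0,d]
  have hl := opNorm2_sq_lower !![0,b;0,d] 0 1
  simp only [Matrix.cons_val', Matrix.cons_val_zero, Matrix.cons_val_one, Matrix.head_cons,
    Matrix.empty_val', Matrix.cons_val_fin_one, Matrix.head_fin_const, Matrix.of_apply] at hu hl
  simp only [mul_zero, mul_one, zero_add, add_zero, normSq_zero, normSq_one] at hl hu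
  linarith

lemma opNorm2_sq_ge_row (a b d : ℂ) :
    normSq a + normSq b ≤ opNorm2 !![a,b;0,d] ^ 2 := by
  have hl := opNorm2_sq_lower !![a,b;0,d] (starRingEnd ℂ a) (starRingEnd ℂ b)
  simp only [Matrix.cons_val', Matrix.cons_val_zero, Matrix.cons_val_one, Matrix.head_cons,
    Matrix.empty_val', Matrix.cons_val_fin_one, Matrix.head_fin_const, Matrix.of_apply] at hl
  rw [show a * starRingEnd ℂ a + b * starRingEnd ℂ b = ((normSq a + normSq b : ℝ) : ℂ) by
    rw [Complex.mul_conj, Complex.mul_conj]; push_cast; ring] at hl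
  simp only [zero_mul, zero_add, Complex.normSq_ofReal, Complex.normSq_conj] at hl
  set s := normSq a + normSq b with hs
  have hs0 : 0 ≤ s := by have := normSq_nonneg a; have := normSq_nonneg b; linarith
  rcases eq_or_lt_of_le hs0 with h0 | h0
  · nlinarith [sq_nonneg (opNorm2 !![a,b;0,d])]
  · have h1 : s * s ≤ opNorm2 !![a,b;0,d] ^ 2 * s := by
      have := normSq_nonneg (d * starRingEnd ℂ b)
      nlinarith
    exact le_of_mul_le_mul_right h1 h0

set_option maxHeartbeats 1000000 in
lemma key_eq_case (a b d : ℂ) (hq : normSq (a * d) ≠ 0)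
    (hT : opNorm2 !![a,b;0,d] ^ 2 = normSq a + normSq b + normSq d) : False := by
  set q := normSq (a * d) with hqdef
  have hq0 : 0 < q := lt_of_le_of_ne (normSq_nonneg _) (Ne.symm hq)
  set T := normSq a + normSq b + normSq d with hTdef
  have ha : a ≠ 0 := fun h => hq (by simp [hqdef, h])
  have hT0 : 0 < T := by
    have : 0 < normSq a := Complex.normSq_pos.mpr ha
    have := normSq_nonneg b; have := normSq_nonneg d
    linarith
  set ε := min (T/2) (q/(8*T)) with hεdef
  have hε0 : 0 < ε := lt_min (by linarith) (by positivity)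
  have hεT : ε ≤ T/2 := min_le_left _ _
  have hTε : T * ε ≤ q/8 := by
    have h1 : ε ≤ q/(8*T) := min_le_right _ _
    calc T * ε ≤ T * (q/(8*T)) := by nlinarith
    _ = q/8 := by field_simp
  have hnorm : opNorm2 !![a,b;0,d] = Real.sqrt T := by
    rw [← hT]
    exact (Real.sqrt_sq (norm_nonneg _)).symm
  have hr : Real.sqrt (T - ε) < ‖Matrix.toEuclideanCLM (𝕜 := ℂ) !![a,b;0,d]‖ := by
    show Real.sqrt (T - ε) < opNorm2 !![a,b;0,d]
    rw [hnorm]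
    exact Real.sqrt_lt_sqrt (by linarith) (by linarith)
  obtain ⟨v, hv1, hv2⟩ :=
    (Matrix.toEuclideanCLM (𝕜 := ℂ) !![a,b;0,d]).exists_lt_apply_of_lt_opNorm hr
  set x := v 0 with hx
  set y := v 1 with hy
  set s := normSq x + normSq y with hsdef
  have hs1 : s < 1 := by
    have h1 : ‖v‖ ^ 2 < 1 := by nlinarith [norm_nonneg v]
    have h2 : ‖v‖ ^ 2 = s := by rw [← vec2_eta v, norm_vec2_sq]
    linarith
  have hs0 : 0 ≤ s := by have := normSq_nonneg x; have := normSq_nonneg y; linarith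
  set P := normSq (a*x + b*y) + normSq (d*y) with hPdef
  have hfv : ‖Matrix.toEuclideanCLM (𝕜 := ℂ) !![a,b;0,d] v‖ ^ 2 = P := by
    rw [← vec2_eta v, norm_apply_sq]
    simp only [Matrix.cons_val', Matrix.cons_val_zero, Matrix.cons_val_one, Matrix.head_cons,
      Matrix.empty_val', Matrix.cons_val_fin_one, Matrix.head_fin_const, Matrix.of_apply]
    rw [zero_mul, zero_add]
  have hP : T - ε < P := by
    have h1 : Real.sqrt (T - ε) ^ 2 < ‖Matrix.toEuclideanCLM (𝕜 := ℂ) !![a,b;0,d] v‖ ^ 2 := by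
      nlinarith [Real.sqrt_nonneg (T - ε), norm_nonneg (Matrix.toEuclideanCLM (𝕜 := ℂ) !![a,b;0,d] v)]
    rw [Real.sq_sqrt (by linarith), hfv] at h1
    exact h1
  set Q := normSq (-(a * starRingEnd ℂ y) + b * starRingEnd ℂ x) + normSq (d * starRingEnd ℂ x)
    with hQdef
  have hQ0 : 0 ≤ Q := by
    have := normSq_nonneg (-(a * starRingEnd ℂ y) + b * starRingEnd ℂ x)
    have := normSq_nonneg (d * starRingEnd ℂ x); linarith
  have hP0 : 0 ≤ P := by
    have := normSq_nonneg (a*x + b*y); have := normSq_nonneg (d*y); linarith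
  have hPQ : P + Q = T * s := by
    rw [hPdef, hQdef, hTdef, hsdef]
    simp only [Complex.normSq_apply, Complex.add_re, Complex.add_im, Complex.mul_re,
      Complex.mul_im, Complex.neg_re, Complex.neg_im, Complex.conj_re, Complex.conj_im]
    ring
  have hQε : Q < ε := by nlinarith
  have hdiv : ε / T * T = ε := div_mul_cancel₀ ε (ne_of_gt hT0)
  have hsl : 1 - ε/T < s := by nlinarith
  have hdet : q * s^2 ≤ P * Q := by
    have hcs := cs (a*x+b*y) (d*y) (d * starRingEnd ℂ x)
      (a * starRingEnd ℂ y - b * starRingEnd ℂ x)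
    have hid : (a*x+b*y) * (d * starRingEnd ℂ x) +
        (d*y) * (a * starRingEnd ℂ y - b * starRingEnd ℂ x) =
        a * d * (((normSq x : ℝ) : ℂ) + ((normSq y : ℝ) : ℂ)) := by
      rw [← Complex.mul_conj x, ← Complex.mul_conj y]
      ring
    rw [hid] at hcs
    have hlhs : normSq (a * d * (((normSq x : ℝ) : ℂ) + ((normSq y : ℝ) : ℂ))) = q * s^2 := by
      rw [← Complex.ofReal_add, Complex.normSq_mul, Complex.normSq_ofReal, hqdef, hsdef]
      ring
    rw [hlhs] at hcs
    have hw : normSq (a * starRingEnd ℂ y - b * starRingEnd ℂ x) =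
        normSq (-(a * starRingEnd ℂ y) + b * starRingEnd ℂ x) := by
      rw [show -(a * starRingEnd ℂ y) + b * starRingEnd ℂ x =
        -(a * starRingEnd ℂ y - b * starRingEnd ℂ x) by ring, Complex.normSq_neg]
    rw [hw] at hcs
    calc q * s^2 ≤ (normSq (a*x+b*y) + normSq (d*y)) *
        (normSq (d * starRingEnd ℂ x) + normSq (-(a * starRingEnd ℂ y) + b * starRingEnd ℂ x)) :=
        hcs
    _ = P * Q := by rw [hPdef, hQdef]; ring
  -- final contradiction
  clear_value q T ε s P Q x y
  have h14 : (1:ℝ)/2 ≤ 1 - ε/T := by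
    have hh : ε / T ≤ 1/2 := by
      rw [div_le_iff₀ hT0]
      linarith
    linarith
  have hsq : (1 - ε/T)^2 ≤ s^2 := by nlinarith
  have hPT : P ≤ T * s := by linarith
  have hPle : P ≤ T := by nlinarith
  have hfinal : q * (1 - ε/T)^2 ≤ T * Q := by
    have h1 : q * (1 - ε/T)^2 ≤ q * s^2 := by nlinarith
    have h2 : P * Q ≤ T * Q := mul_le_mul_of_nonneg_right hPle hQ0
    linarith
  have h3 : T * Q < T * ε := by
    have := mul_lt_mul_of_pos_left hQε hT0
    linarith
  have h4 : (1:ℝ)/4 ≤ (1 - ε/T)^2 := by nlinarith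
  have h5 : q/4 ≤ q * (1 - ε/T)^2 := by nlinarith
  linarith

/-- **Lemma 3.2**. -/
theorem stmt10 (α β γ α' β' γ' δ' : ℂ) (hγ' : γ' ≠ 0)
    (h : ∀ z₁ z₂ : ℂ,
      opNorm2 !![α * z₁, β * z₁ + γ * z₂; 0, 0] =
        opNorm2 !![α' * z₁, β' * z₁ + γ' * z₂; 0, δ' * z₂]) :
    α' * δ' = 0 := by
  by_cases hq : normSq (α' * δ') = 0
  · exact Complex.normSq_eq_zero.mp hq
  exfalso
  -- step A: z = (1,0)
  have h10 := h 1 0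
  simp only [mul_one, mul_zero, add_zero] at h10
  have eA : normSq α + normSq β = normSq α' + normSq β' := by
    rw [← opNorm2_row α β, h10, opNorm2_row]
  -- step B: z = (0,1)
  have h01 := h 0 1
  simp only [mul_one, mul_zero, zero_add] at h01
  have eG : normSq γ = normSq γ' + normSq δ' := by
    have e1 := opNorm2_row 0 γ
    rw [normSq_zero, zero_add] at e1
    rw [← e1, h01, opNorm2_col]
  -- step C: cross terms
  set c : ℂ := β * starRingEnd ℂ γ - β' * starRingEnd ℂ γ' with hcdef
  have hkey : ∀ z : ℂ, 0 ≤ normSq δ' + 2 * (c * z).re := by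
    intro z
    have hz1 := h z 1
    simp only [mul_one] at hz1
    have eL : opNorm2 !![α * z, β * z + γ; 0, 0] ^ 2 = normSq (α * z) + normSq (β * z + γ) :=
      opNorm2_row _ _
    have eR := opNorm2_sq_ge_row (α' * z) (β' * z + γ') δ'
    rw [← hz1, eL] at eR
    have e1 : normSq (β * z + γ) =
        normSq β * normSq z + normSq γ + 2 * ((β * starRingEnd ℂ γ) * z).re := by
      simp only [Complex.normSq_apply, Complex.add_re, Complex.add_im, Complex.mul_re,
        Complex.mul_im, Complex.conj_re, Complex.conj_im]
      ring
    have e2 : normSq (β' * z + γ') =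
        normSq β' * normSq z + normSq γ' + 2 * ((β' * starRingEnd ℂ γ') * z).re := by
      simp only [Complex.normSq_apply, Complex.add_re, Complex.add_im, Complex.mul_re,
        Complex.mul_im, Complex.conj_re, Complex.conj_im]
      ring
    have e3 : normSq (α * z) = normSq α * normSq z := Complex.normSq_mul _ _
    have e4 : normSq (α' * z) = normSq α' * normSq z := Complex.normSq_mul _ _
    have e5 : (c * z).re = ((β * starRingEnd ℂ γ) * z).re - ((β' * starRingEnd ℂ γ') * z).re := by
      rw [hcdef, sub_mul, Complex.sub_re]
    rw [e1, e3, e4, e2] at eR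
    rw [e5]
    nlinarith [normSq_nonneg z, eA, eG]
  have hc : c = 0 := by
    by_contra hc0
    have hnc : 0 < normSq c := Complex.normSq_pos.mpr hc0
    have hk := hkey ((-((normSq δ' + 1) / normSq c) : ℝ) * starRingEnd ℂ c)
    have he : (c * ((-((normSq δ' + 1) / normSq c) : ℝ) * starRingEnd ℂ c)).re =
        -(normSq δ' + 1) := by
      rw [show c * ((-((normSq δ' + 1) / normSq c) : ℝ) * starRingEnd ℂ c) =
        ((-((normSq δ' + 1) / normSq c) : ℝ) : ℂ) * (c * starRingEnd ℂ c) by ring,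
        Complex.mul_conj, ← Complex.ofReal_mul, Complex.ofReal_re]
      field_simp
    rw [he] at hk
    have := normSq_nonneg δ'
    linarith
  -- step D: z = (1,1)
  have h11 := h 1 1
  simp only [mul_one] at h11
  have eT : opNorm2 !![α', β' + γ'; 0, δ'] ^ 2 = normSq α' + normSq (β' + γ') + normSq δ' := by
    rw [← h11, opNorm2_row]
    have hbc : β * starRingEnd ℂ γ = β' * starRingEnd ℂ γ' := by
      have := sub_eq_zero.mp hc
      exact this
    have e1 : normSq (β + γ) = normSq β + normSq γ + 2 * (β * starRingEnd ℂ γ).re := by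
      simp only [Complex.normSq_apply, Complex.add_re, Complex.add_im, Complex.mul_re,
        Complex.mul_im, Complex.conj_re, Complex.conj_im]
      ring
    have e2 : normSq (β' + γ') = normSq β' + normSq γ' + 2 * (β' * starRingEnd ℂ γ').re := by
      simp only [Complex.normSq_apply, Complex.add_re, Complex.add_im, Complex.mul_re,
        Complex.mul_im, Complex.conj_re, Complex.conj_im]
      ring
    rw [e1, e2, hbc]
    linarith
  exact key_eq_case α' (β' + γ') δ' hq eT
end

section
/- There exist no invertible upper triangular matrices X₁, X₂, Y₁, Y₂ ∈ M₂(ℂ) such that ‖X₁ · [[z₁, z₂],[0,0]] · X₂‖ = ‖Y₁ · [[z₁, 0],[0, z₂]] · Y₂‖ for every z₁, z₂ ∈ ℂ. -/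
open Matrix

lemma euclid_norm_sq (x : EuclideanSpace ℂ (Fin 2)) :
    ‖x‖ ^ 2 = ‖x 0‖ ^ 2 + ‖x 1‖ ^ 2 := by
  rw [EuclideanSpace.norm_eq, Real.sq_sqrt (by positivity)]
  simp [Fin.sum_univ_two]

lemma clm_apply_norm_sq (M : Matrix (Fin 2) (Fin 2) ℂ) (x : Fin 2 → ℂ) :
    ‖Matrix.toEuclideanCLM (𝕜 := ℂ) M ((WithLp.equiv 2 _).symm x)‖ ^ 2
      = ‖M.mulVec x 0‖ ^ 2 + ‖M.mulVec x 1‖ ^ 2 := by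
  change ‖Matrix.toEuclideanCLM (𝕜 := ℂ) M (WithLp.toLp 2 x)‖ ^ 2 = _
  rw [Matrix.toEuclideanCLM_toLp, euclid_norm_sq]

lemma opNorm2_sq_le (M : Matrix (Fin 2) (Fin 2) ℂ) (c : ℝ) (hc : 0 ≤ c)
    (h : ∀ x : Fin 2 → ℂ, ‖M.mulVec x 0‖ ^ 2 + ‖M.mulVec x 1‖ ^ 2
      ≤ c * (‖x 0‖ ^ 2 + ‖x 1‖ ^ 2)) :
    opNorm2 M ^ 2 ≤ c := by
  have h1 : opNorm2 M ≤ Real.sqrt c := by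
    apply ContinuousLinearMap.opNorm_le_bound _ (Real.sqrt_nonneg c)
    intro x
    have hx : x = (WithLp.equiv 2 _).symm (⇑(WithLp.equiv 2 (Fin 2 → ℂ)) x) := rfl
    have h2 := clm_apply_norm_sq M (⇑(WithLp.equiv 2 (Fin 2 → ℂ)) x)
    rw [← hx] at h2
    have h3 : ‖(Matrix.toEuclideanCLM (𝕜 := ℂ) M) x‖ ^ 2 ≤ c * ‖x‖ ^ 2 := by
      rw [h2, euclid_norm_sq x]
      exact h _
    calc ‖(Matrix.toEuclideanCLM (𝕜 := ℂ) M) x‖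
        = Real.sqrt (‖(Matrix.toEuclideanCLM (𝕜 := ℂ) M) x‖ ^ 2) :=
          (Real.sqrt_sq (norm_nonneg _)).symm
      _ ≤ Real.sqrt (c * ‖x‖ ^ 2) := Real.sqrt_le_sqrt h3
      _ = Real.sqrt c * ‖x‖ := by
          rw [Real.sqrt_mul hc, Real.sqrt_sq (norm_nonneg _)]
  calc opNorm2 M ^ 2 ≤ Real.sqrt c ^ 2 := by
        apply pow_le_pow_left₀ (norm_nonneg _) h1
    _ = c := Real.sq_sqrt hc

lemma sq_le_opNorm2 (M : Matrix (Fin 2) (Fin 2) ℂ) (x : Fin 2 → ℂ) :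
    ‖M.mulVec x 0‖ ^ 2 + ‖M.mulVec x 1‖ ^ 2 ≤ opNorm2 M ^ 2 * (‖x 0‖ ^ 2 + ‖x 1‖ ^ 2) := by
  have h := (Matrix.toEuclideanCLM (𝕜 := ℂ) M).le_opNorm ((WithLp.equiv 2 _).symm x)
  have h2 : ‖(Matrix.toEuclideanCLM (𝕜 := ℂ) M) ((WithLp.equiv 2 _).symm x)‖ ^ 2
      ≤ opNorm2 M ^ 2 * ‖(WithLp.equiv 2 (Fin 2 → ℂ)).symm x‖ ^ 2 := by
    rw [← mul_pow]
    exact pow_le_pow_left₀ (norm_nonneg _) h 2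
  rw [clm_apply_norm_sq, euclid_norm_sq] at h2
  simpa using h2

lemma cs2 (r t u v : ℂ) :
    ‖r * u + t * v‖ ^ 2 ≤ (‖r‖ ^ 2 + ‖t‖ ^ 2) * (‖u‖ ^ 2 + ‖v‖ ^ 2) := by
  have h1 : ‖r * u + t * v‖ ≤ ‖r‖ * ‖u‖ + ‖t‖ * ‖v‖ := by
    calc ‖r * u + t * v‖ ≤ ‖r * u‖ + ‖t * v‖ := norm_add_le _ _
      _ = ‖r‖ * ‖u‖ + ‖t‖ * ‖v‖ := by rw [norm_mul, norm_mul]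
  nlinarith [sq_nonneg (‖r‖ * ‖v‖ - ‖t‖ * ‖u‖), norm_nonneg (r * u + t * v),
    mul_nonneg (norm_nonneg r) (norm_nonneg u), mul_nonneg (norm_nonneg t) (norm_nonneg v)]

lemma opNorm2_row_s11 (r t : ℂ) : opNorm2 !![r, t; 0, 0] = Real.sqrt (‖r‖ ^ 2 + ‖t‖ ^ 2) := by
  have hup : opNorm2 !![r, t; 0, 0] ^ 2 ≤ ‖r‖ ^ 2 + ‖t‖ ^ 2 := by
    apply opNorm2_sq_le _ _ (by positivity)
    intro x
    have h0 : (!![r, t; 0, 0]).mulVec x 0 = r * x 0 + t * x 1 := by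
      simp [Matrix.mulVec, dotProduct, Fin.sum_univ_two]
    have h1 : (!![r, t; 0, 0]).mulVec x 1 = 0 := by
      simp [Matrix.mulVec, dotProduct, Fin.sum_univ_two]
    rw [h0, h1]
    simpa using cs2 r t (x 0) (x 1)
  rcases eq_or_lt_of_le (by positivity : (0:ℝ) ≤ ‖r‖ ^ 2 + ‖t‖ ^ 2) with h | h
  · have hr2 : ‖r‖ ^ 2 = 0 := by nlinarith [sq_nonneg ‖r‖, sq_nonneg ‖t‖]
    have ht2 : ‖t‖ ^ 2 = 0 := by nlinarith [sq_nonneg ‖r‖, sq_nonneg ‖t‖]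
    have hr : r = 0 := norm_eq_zero.mp ((pow_eq_zero_iff two_ne_zero).mp hr2)
    have ht : t = 0 := norm_eq_zero.mp ((pow_eq_zero_iff two_ne_zero).mp ht2)
    subst hr; subst ht
    have : (!![(0:ℂ), 0; 0, 0] : Matrix (Fin 2) (Fin 2) ℂ) = 0 := by
      ext i j; fin_cases i <;> fin_cases j <;> simp
    rw [this]
    simp [opNorm2, ← h]
  · -- lower bound
    have hlow := sq_le_opNorm2 !![r, t; 0, 0] ![(starRingEnd ℂ) r, (starRingEnd ℂ) t]
    have h0 : (!![r, t; 0, 0]).mulVec ![(starRingEnd ℂ) r, (starRingEnd ℂ) t] 0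
        = ((‖r‖^2 + ‖t‖^2 : ℝ) : ℂ) := by
      simp [Matrix.mulVec, dotProduct, Fin.sum_univ_two, Complex.mul_conj,
        Complex.normSq_eq_norm_sq]
    have h1 : (!![r, t; 0, 0]).mulVec ![(starRingEnd ℂ) r, (starRingEnd ℂ) t] 1 = 0 := by
      simp [Matrix.mulVec, dotProduct, Fin.sum_univ_two]
    rw [h0, h1] at hlow
    simp only [Matrix.cons_val_zero, Matrix.cons_val_one, Matrix.head_cons, norm_zero] at hlow
    have hnormc : ‖((‖r‖^2 + ‖t‖^2 : ℝ) : ℂ)‖ = ‖r‖^2 + ‖t‖^2 := by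
      rw [Complex.norm_real, Real.norm_eq_abs, abs_of_nonneg (by positivity)]
    have hconj : ‖(starRingEnd ℂ) r‖ ^ 2 + ‖(starRingEnd ℂ) t‖ ^ 2 = ‖r‖^2 + ‖t‖^2 := by
      simp
    rw [hnormc] at hlow
    rw [hconj] at hlow
    have hS : ‖r‖^2 + ‖t‖^2 ≤ opNorm2 !![r, t; 0, 0] ^ 2 := by
      have := hlow
      nlinarith [h]
    have heq : opNorm2 !![r, t; 0, 0] ^ 2 = ‖r‖^2 + ‖t‖^2 := le_antisymm hup hS
    have hnn : (0:ℝ) ≤ opNorm2 !![r, t; 0, 0] := norm_nonneg _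
    rw [← heq]
    exact (Real.sqrt_sq hnn).symm

lemma opNorm2_col_s11 (r t : ℂ) : opNorm2 !![0, r; 0, t] = Real.sqrt (‖r‖ ^ 2 + ‖t‖ ^ 2) := by
  have hup : opNorm2 !![0, r; 0, t] ^ 2 ≤ ‖r‖ ^ 2 + ‖t‖ ^ 2 := by
    apply opNorm2_sq_le _ _ (by positivity)
    intro x
    have h0 : (!![0, r; 0, t]).mulVec x 0 = r * x 1 := by
      simp [Matrix.mulVec, dotProduct, Fin.sum_univ_two]
    have h1 : (!![0, r; 0, t]).mulVec x 1 = t * x 1 := by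
      simp [Matrix.mulVec, dotProduct, Fin.sum_univ_two]
    rw [h0, h1, norm_mul, norm_mul]
    have := sq_nonneg (‖x 0‖)
    nlinarith [sq_nonneg ‖r‖, sq_nonneg ‖t‖, sq_nonneg (‖x 0‖), sq_nonneg (‖x 1‖),
      mul_nonneg (sq_nonneg ‖r‖) (sq_nonneg (‖x 0‖)), mul_nonneg (sq_nonneg ‖t‖) (sq_nonneg (‖x 0‖))]
  have hlow := sq_le_opNorm2 !![0, r; 0, t] ![0, 1]
  have h0 : (!![0, r; 0, t]).mulVec ![0, 1] 0 = r := by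
    simp [Matrix.mulVec, dotProduct, Fin.sum_univ_two]
  have h1 : (!![0, r; 0, t]).mulVec ![0, 1] 1 = t := by
    simp [Matrix.mulVec, dotProduct, Fin.sum_univ_two]
  rw [h0, h1] at hlow
  simp only [Matrix.cons_val_zero, Matrix.cons_val_one, Matrix.head_cons, norm_zero, norm_one] at hlow
  have hS : ‖r‖^2 + ‖t‖^2 ≤ opNorm2 !![0, r; 0, t] ^ 2 := by nlinarith
  have heq : opNorm2 !![0, r; 0, t] ^ 2 = ‖r‖^2 + ‖t‖^2 := le_antisymm hup hS
  have hnn : (0:ℝ) ≤ opNorm2 !![0, r; 0, t] := norm_nonneg _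
  rw [← heq]
  exact (Real.sqrt_sq hnn).symm

lemma opNorm2_sq_le_frob (M : Matrix (Fin 2) (Fin 2) ℂ) :
    opNorm2 M ^ 2 ≤ ‖M 0 0‖ ^ 2 + ‖M 0 1‖ ^ 2 + ‖M 1 0‖ ^ 2 + ‖M 1 1‖ ^ 2 := by
  apply opNorm2_sq_le _ _ (by positivity)
  intro x
  have h0 : M.mulVec x 0 = M 0 0 * x 0 + M 0 1 * x 1 := by
    simp [Matrix.mulVec, dotProduct, Fin.sum_univ_two]
  have h1 : M.mulVec x 1 = M 1 0 * x 0 + M 1 1 * x 1 := by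
    simp [Matrix.mulVec, dotProduct, Fin.sum_univ_two]
  rw [h0, h1]
  have c0 := cs2 (M 0 0) (M 0 1) (x 0) (x 1)
  have c1 := cs2 (M 1 0) (M 1 1) (x 0) (x 1)
  nlinarith [sq_nonneg (‖x 0‖), sq_nonneg (‖x 1‖)]

set_option maxHeartbeats 1000000 in
lemma opNorm2_strict (m n e : ℂ) (hm : m ≠ 0) (he : e ≠ 0) :
    opNorm2 !![m, n; 0, e] ^ 2 < ‖m‖ ^ 2 + ‖n‖ ^ 2 + ‖e‖ ^ 2 := by
  set A : ℝ := ‖m‖ ^ 2 with hA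
  set C : ℝ := ‖n‖ ^ 2 + ‖e‖ ^ 2 with hCdef
  set Bb : ℝ := ‖m‖ * ‖n‖ with hBb
  set R : ℝ := Real.sqrt (((A - C) / 2) ^ 2 + Bb ^ 2) with hRdef
  set K : ℝ := (A + C) / 2 + R with hKdef
  have hAnn : 0 ≤ A := by positivity
  have hCnn : 0 ≤ C := by positivity
  have hR2 : R ^ 2 = ((A - C) / 2) ^ 2 + Bb ^ 2 := Real.sq_sqrt (by positivity)
  have hRnn : 0 ≤ R := Real.sqrt_nonneg _
  have hRge : |(A - C) / 2| ≤ R := by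
    rw [hRdef, ← Real.sqrt_sq_eq_abs]
    exact Real.sqrt_le_sqrt (by nlinarith [sq_nonneg Bb])
  have habs := abs_le.mp hRge
  have hKA : 0 ≤ K - A := by rw [hKdef]; cases' habs with h1 h2; linarith
  have hKC : 0 ≤ K - C := by rw [hKdef]; cases' habs with h1 h2; linarith
  have hprod : (K - A) * (K - C) = Bb ^ 2 := by
    have : K - A = R - (A - C) / 2 := by rw [hKdef]; ring
    have h2 : K - C = R + (A - C) / 2 := by rw [hKdef]; ring
    rw [this, h2]; nlinarith [hR2]
  -- upper bound: opNorm2 ^ 2 ≤ K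
  have hup : opNorm2 !![m, n; 0, e] ^ 2 ≤ K := by
    apply opNorm2_sq_le _ _ (by linarith)
    intro x
    have h0 : (!![m, n; 0, e]).mulVec x 0 = m * x 0 + n * x 1 := by
      simp [Matrix.mulVec, dotProduct, Fin.sum_univ_two]
    have h1 : (!![m, n; 0, e]).mulVec x 1 = e * x 1 := by
      simp [Matrix.mulVec, dotProduct, Fin.sum_univ_two]
    rw [h0, h1]
    set s := ‖x 0‖ with hs
    set t := ‖x 1‖ with ht
    have hsnn : 0 ≤ s := norm_nonneg _
    have htnn : 0 ≤ t := norm_nonneg _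
    have hb1 : ‖m * x 0 + n * x 1‖ ≤ ‖m‖ * s + ‖n‖ * t := by
      calc ‖m * x 0 + n * x 1‖ ≤ ‖m * x 0‖ + ‖n * x 1‖ := norm_add_le _ _
        _ = ‖m‖ * s + ‖n‖ * t := by rw [norm_mul, norm_mul]
    have hb2 : ‖m * x 0 + n * x 1‖ ^ 2 ≤ (‖m‖ * s + ‖n‖ * t) ^ 2 := by
      apply pow_le_pow_left₀ (norm_nonneg _) hb1
    have hb3 : ‖e * x 1‖ ^ 2 = ‖e‖ ^ 2 * t ^ 2 := by rw [norm_mul]; ring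
    -- AM-GM : 2 * Bb * s * t ≤ (K - A) * s ^ 2 + (K - C) * t ^ 2
    have hsq := sq_nonneg (Real.sqrt (K - A) * s - Real.sqrt (K - C) * t)
    have hsqrt_mul : Real.sqrt (K - A) * Real.sqrt (K - C) = Bb := by
      rw [← Real.sqrt_mul hKA, hprod,
        Real.sqrt_sq (mul_nonneg (norm_nonneg m) (norm_nonneg n))]
    have hKAsq := Real.sq_sqrt hKA
    have hKCsq := Real.sq_sqrt hKC
    have hexp : (Real.sqrt (K - A) * s - Real.sqrt (K - C) * t) ^ 2
        = (K - A) * s ^ 2 + (K - C) * t ^ 2 - 2 * Bb * (s * t) := by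
      linear_combination s ^ 2 * hKAsq + t ^ 2 * hKCsq - 2 * s * t * hsqrt_mul
    have hamgm : 2 * Bb * (s * t) ≤ (K - A) * s ^ 2 + (K - C) * t ^ 2 := by
      rw [hexp] at hsq; linarith
    have hexp2 : (‖m‖ * s + ‖n‖ * t) ^ 2 + ‖e‖ ^ 2 * t ^ 2
        = A * s ^ 2 + 2 * Bb * (s * t) + C * t ^ 2 := by
      rw [hA, hBb, hCdef]; ring
    have hring : K * (s ^ 2 + t ^ 2) - (A * s ^ 2 + 2 * Bb * (s * t) + C * t ^ 2)
        = ((K - A) * s ^ 2 + (K - C) * t ^ 2) - 2 * Bb * (s * t) := by ring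
    linarith [hb2, hb3, hamgm, hexp2, hring]
  -- strict: K < A + C
  have hme : 0 < ‖m‖ ^ 2 * ‖e‖ ^ 2 := by
    have h1 : 0 < ‖m‖ := norm_pos_iff.mpr hm
    have h2 : 0 < ‖e‖ := norm_pos_iff.mpr he
    positivity
  have hBlt : ((A - C) / 2) ^ 2 + Bb ^ 2 < ((A + C) / 2) ^ 2 := by
    have : Bb ^ 2 = A * (C - ‖e‖ ^ 2) := by rw [hBb, hA, hCdef]; ring
    nlinarith [hme]
  have hKlt : K < A + C := by
    have hRlt : R < (A + C) / 2 := by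
      have := Real.sqrt_lt_sqrt (by positivity) hBlt
      rwa [Real.sqrt_sq (by positivity)] at this
    rw [hKdef]; linarith
  calc opNorm2 !![m, n; 0, e] ^ 2 ≤ K := hup
    _ < A + C := hKlt
    _ = ‖m‖ ^ 2 + ‖n‖ ^ 2 + ‖e‖ ^ 2 := by rw [hA, hCdef]; ring

lemma para (z w : ℂ) : ‖z + w‖ ^ 2 + ‖z - w‖ ^ 2 = 2 * ‖z‖ ^ 2 + 2 * ‖w‖ ^ 2 := by
  have := parallelogram_law_with_norm ℂ z w
  simp only [pow_two]
  linarith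

/-- There exist no invertible upper triangular `X₁, X₂, Y₁, Y₂ ∈ M₂(ℂ)` such that
`‖X₁ [[z₁,z₂],[0,0]] X₂‖ = ‖Y₁ [[z₁,0],[0,z₂]] Y₂‖` for all `z₁, z₂ ∈ ℂ`. -/
theorem stmt11 :
    ¬ ∃ X₁ X₂ Y₁ Y₂ : Matrix (Fin 2) (Fin 2) ℂ,
      IsUnit X₁ ∧ IsUnit X₂ ∧ IsUnit Y₁ ∧ IsUnit Y₂ ∧
      X₁ 1 0 = 0 ∧ X₂ 1 0 = 0 ∧ Y₁ 1 0 = 0 ∧ Y₂ 1 0 = 0 ∧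
      ∀ z₁ z₂ : ℂ,
        opNorm2 (X₁ * !![z₁, z₂; 0, 0] * X₂) = opNorm2 (Y₁ * !![z₁, 0; 0, z₂] * Y₂) := by
  rintro ⟨X₁, X₂, Y₁, Y₂, _, _, hY₁, hY₂, hx1, hx2, hy1, hy2, h⟩
  -- names for the relevant entries
  set a : ℂ := X₁ 0 0 with ha
  set p : ℂ := X₂ 0 0 with hp
  set q : ℂ := X₂ 0 1 with hq
  set s : ℂ := X₂ 1 1 with hs
  set m : ℂ := Y₁ 0 0 * Y₂ 0 0 with hmdef
  set nn : ℂ := Y₁ 0 0 * Y₂ 0 1 with hnndef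
  set k : ℂ := Y₁ 0 1 * Y₂ 1 1 with hkdef
  set e : ℂ := Y₁ 1 1 * Y₂ 1 1 with hedef
  -- nonvanishing of m and e
  have hdY₁ : IsUnit Y₁.det := (Matrix.isUnit_iff_isUnit_det _).mp hY₁
  have hdY₂ : IsUnit Y₂.det := (Matrix.isUnit_iff_isUnit_det _).mp hY₂
  rw [Matrix.det_fin_two, hy1] at hdY₁
  rw [Matrix.det_fin_two, hy2] at hdY₂
  have hdY₁' := isUnit_iff_ne_zero.mp hdY₁
  have hdY₂' := isUnit_iff_ne_zero.mp hdY₂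
  simp only [mul_zero, sub_zero] at hdY₁' hdY₂'
  have hm : m ≠ 0 :=
    mul_ne_zero (left_ne_zero_of_mul hdY₁') (left_ne_zero_of_mul hdY₂')
  have he : e ≠ 0 :=
    mul_ne_zero (right_ne_zero_of_mul hdY₁') (right_ne_zero_of_mul hdY₂')
  -- explicit form of the two products
  have hL : ∀ z₁ z₂ : ℂ, X₁ * !![z₁, z₂; 0, 0] * X₂
      = !![a * p * z₁, a * q * z₁ + a * s * z₂; 0, 0] := by
    intro z₁ z₂
    ext i j
    fin_cases i <;> fin_cases j <;>
      simp [Matrix.mul_apply, Fin.sum_univ_two, hx1, hx2, ha, hp, hq, hs] <;> ring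
  have hN : ∀ z₁ z₂ : ℂ, Y₁ * !![z₁, 0; 0, z₂] * Y₂
      = !![m * z₁, nn * z₁ + k * z₂; 0, e * z₂] := by
    intro z₁ z₂
    ext i j
    fin_cases i <;> fin_cases j <;>
      simp [Matrix.mul_apply, Fin.sum_univ_two, hy1, hy2, hmdef, hnndef, hkdef, hedef] <;> ring
  -- the key consequence of the hypothesis
  have E : ∀ z₁ z₂ : ℂ, opNorm2 !![m * z₁, nn * z₁ + k * z₂; 0, e * z₂]
      = Real.sqrt (‖a * p * z₁‖ ^ 2 + ‖a * q * z₁ + a * s * z₂‖ ^ 2) := by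
    intro z₁ z₂
    rw [← hN, ← h, hL, opNorm2_row_s11]
  -- evaluate at (1, 0)
  have h10 : ‖m‖ ^ 2 + ‖nn‖ ^ 2 = ‖a * p‖ ^ 2 + ‖a * q‖ ^ 2 := by
    have := E 1 0
    have hmat : (!![m * 1, nn * 1 + k * 0; 0, e * 0] : Matrix (Fin 2) (Fin 2) ℂ)
        = !![m, nn; 0, 0] := by norm_num
    rw [hmat, opNorm2_row_s11] at this
    have h2 := congrArg (· ^ 2) this
    simp only [mul_one, mul_zero, add_zero] at h2
    rwa [Real.sq_sqrt (by positivity), Real.sq_sqrt (by positivity)] at h2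
  -- evaluate at (0, 1)
  have h01 : ‖k‖ ^ 2 + ‖e‖ ^ 2 = ‖a * s‖ ^ 2 := by
    have := E 0 1
    have hmat : (!![m * 0, nn * 0 + k * 1; 0, e * 1] : Matrix (Fin 2) (Fin 2) ℂ)
        = !![0, k; 0, e] := by norm_num
    rw [hmat, opNorm2_col_s11] at this
    have h2 := congrArg (· ^ 2) this
    simp only [mul_one, mul_zero, zero_add, norm_zero] at h2
    rw [Real.sq_sqrt (by positivity), Real.sq_sqrt (by positivity)] at h2
    simpa using h2
  -- evaluate at (1, 1)
  have h11 : opNorm2 !![m, nn + k; 0, e] ^ 2 = ‖a * p‖ ^ 2 + ‖a * q + a * s‖ ^ 2 := by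
    have := E 1 1
    have hmat : (!![m * 1, nn * 1 + k * 1; 0, e * 1] : Matrix (Fin 2) (Fin 2) ℂ)
        = !![m, nn + k; 0, e] := by norm_num
    rw [hmat] at this
    rw [this]
    simp only [mul_one]
    exact Real.sq_sqrt (by positivity)
  -- evaluate at (1, -1)
  have h1m : opNorm2 !![m, nn - k; 0, -e] ^ 2 = ‖a * p‖ ^ 2 + ‖a * q - a * s‖ ^ 2 := by
    have := E 1 (-1)
    have hmat : (!![m * 1, nn * 1 + k * (-1); 0, e * (-1)] : Matrix (Fin 2) (Fin 2) ℂ)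
        = !![m, nn - k; 0, -e] := by
      ext i j; fin_cases i <;> fin_cases j <;> simp <;> ring
    rw [hmat] at this
    rw [this]
    have harg : (a * q * 1 + a * s * (-1)) = a * q - a * s := by ring
    rw [mul_one, harg]
    exact Real.sq_sqrt (by positivity)
  -- Frobenius bounds
  have hf11 : opNorm2 !![m, nn + k; 0, e] ^ 2 ≤ ‖m‖ ^ 2 + ‖nn + k‖ ^ 2 + ‖e‖ ^ 2 := by
    have := opNorm2_sq_le_frob !![m, nn + k; 0, e]
    simpa using this
  have hf1m : opNorm2 !![m, nn - k; 0, -e] ^ 2 ≤ ‖m‖ ^ 2 + ‖nn - k‖ ^ 2 + ‖e‖ ^ 2 := by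
    have := opNorm2_sq_le_frob !![m, nn - k; 0, -e]
    simpa using this
  -- parallelogram laws
  have pQ : ‖a * q + a * s‖ ^ 2 + ‖a * q - a * s‖ ^ 2
      = 2 * ‖a * q‖ ^ 2 + 2 * ‖a * s‖ ^ 2 := para _ _
  have pT : ‖nn + k‖ ^ 2 + ‖nn - k‖ ^ 2 = 2 * ‖nn‖ ^ 2 + 2 * ‖k‖ ^ 2 := para _ _
  -- equality at (1,1) forces saturation of the Frobenius bound
  have hkey : opNorm2 !![m, nn + k; 0, e] ^ 2 = ‖m‖ ^ 2 + ‖nn + k‖ ^ 2 + ‖e‖ ^ 2 := by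
    have l1 : ‖a * p‖ ^ 2 + ‖a * q + a * s‖ ^ 2 ≤ ‖m‖ ^ 2 + ‖nn + k‖ ^ 2 + ‖e‖ ^ 2 := by
      rw [← h11]; exact hf11
    have l2 : ‖a * p‖ ^ 2 + ‖a * q - a * s‖ ^ 2 ≤ ‖m‖ ^ 2 + ‖nn - k‖ ^ 2 + ‖e‖ ^ 2 := by
      rw [← h1m]; exact hf1m
    rw [h11]
    linarith [pQ, pT, h10, h01, l1, l2]
  have := opNorm2_strict m (nn + k) e hm he
  linarith [hkey, this]
end

section
/- For λ, z₁, z₂ ∈ ℂ let A(λ,z₁,z₂) ∈ M₄(ℂ) be the matrix with rows (λ,0,z₁,z₂), (0,λ,0,0), (0,0,λ,0), (0,0,0,λ), and let B(λ,z₁,z₂) ∈ M₄(ℂ) be the matrix with rows (λ,0,z₁,0), (0,λ,0,z₂), (0,0,λ,0), (0,0,0,λ). Then for every pair of invertible matrices X, Y ∈ M₄(ℂ) there exist λ, z₁, z₂ ∈ ℂ such that ‖X·A(λ,z₁,z₂)·X⁻¹‖ ≠ ‖Y·B(λ,z₁,z₂)·Y⁻¹‖. (Consequently, the unital completely bounded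 isomorphism Ψ: A(λ,z₁,z₂) ↦ B(λ,z₁,z₂) between these finite-dimensional commutative unital operator algebras is not similar to an isometric isomorphism.) -/
/-- The operator norm of a 4×4 complex matrix acting on `ℂ⁴` with the Euclidean norm. -/
noncomputable def opNorm4 (M : Matrix (Fin 4) (Fin 4) ℂ) : ℝ :=
  ‖Matrix.toEuclideanCLM (𝕜 := ℂ) M‖

/-- The element of the algebra `𝒜_ℛ`. -/
def matA (l z₁ z₂ : ℂ) : Matrix (Fin 4) (Fin 4) ℂ :=
  !![l, 0, z₁, z₂; 0, l, 0, 0; 0, 0, l, 0; 0, 0, 0, l]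

/-- The element of the algebra `𝒜_𝒟`, the image of `matA l z₁ z₂` under `Ψ`. -/
def matB (l z₁ z₂ : ℂ) : Matrix (Fin 4) (Fin 4) ℂ :=
  !![l, 0, z₁, 0; 0, l, 0, z₂; 0, 0, l, 0; 0, 0, 0, l]

open scoped ComplexConjugate
noncomputable section
abbrev E4 := EuclideanSpace ℂ (Fin 4)
def tp (v : Fin 4 → ℂ) : E4 := (WithLp.equiv 2 (Fin 4 → ℂ)).symm v
lemma tp_apply (v : Fin 4 → ℂ) (i : Fin 4) : tp v i = v i := rfl
lemma clm_apply (M : Matrix (Fin 4) (Fin 4) ℂ) (v : Fin 4 → ℂ) :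
    Matrix.toEuclideanCLM (𝕜 := ℂ) M (tp v) = tp (M.mulVec v) := by
  simp [tp, Matrix.toLin'_apply]
lemma inner_tp (v w : Fin 4 → ℂ) : (inner ℂ (tp v) (tp w) : ℂ) = ∑ i, conj (v i) * w i := by
  simp [tp, PiLp.inner_apply, RCLike.inner_apply, mul_comm]

-- action of a sum of two outer products
lemma outer2_apply (a p c q : Fin 4 → ℂ) (x : E4) :
    Matrix.toEuclideanCLM (𝕜 := ℂ) (Matrix.vecMulVec a p + Matrix.vecMulVec c q) x
      = (inner ℂ (tp (star p)) x : ℂ) • tp a + (inner ℂ (tp (star q)) x : ℂ) • tp c := by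
  have hx : x = tp (WithLp.equiv 2 (Fin 4 → ℂ) x) := rfl
  rw [hx, clm_apply]
  apply PiLp.ext
  intro i
  simp only [tp_apply, Matrix.mulVec, Matrix.add_apply, Matrix.vecMulVec_apply, inner_tp,
    Pi.add_apply, Pi.smul_apply, smul_eq_mul, Pi.star_apply, RCLike.star_def, Complex.conj_conj,
    dotProduct]
  rw [show ((∑ j, p j * (WithLp.equiv 2 (Fin 4 → ℂ)) x j) • tp a +
        (∑ j, q j * (WithLp.equiv 2 (Fin 4 → ℂ)) x j) • tp c) i
      = (∑ j, p j * (WithLp.equiv 2 (Fin 4 → ℂ)) x j) * a i +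
        (∑ j, q j * (WithLp.equiv 2 (Fin 4 → ℂ)) x j) * c i from rfl]
  rw [Finset.sum_mul, Finset.sum_mul, ← Finset.sum_add_distrib]
  apply Finset.sum_congr rfl; intro j _; ring

lemma norm_tp_sq (v : Fin 4 → ℂ) : ‖tp v‖ ^ 2 = ∑ i, ‖v i‖ ^ 2 := by
  rw [EuclideanSpace.norm_eq, Real.sq_sqrt (by positivity)]; rfl

lemma norm_tp_star (v : Fin 4 → ℂ) : ‖tp (star v)‖ = ‖tp v‖ := by
  rw [EuclideanSpace.norm_eq, EuclideanSpace.norm_eq]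
  congr 1; apply Finset.sum_congr rfl; intro i _; simp [tp_apply, Pi.star_apply]

lemma tp_eq_zero {v : Fin 4 → ℂ} (h : tp v = 0) : v = 0 := by
  funext i; exact congrFun (congrArg (WithLp.equiv 2 (Fin 4 → ℂ)) h) i

lemma outer1_apply (a p : Fin 4 → ℂ) (x : E4) :
    Matrix.toEuclideanCLM (𝕜 := ℂ) (Matrix.vecMulVec a p) x
      = (inner ℂ (tp (star p)) x : ℂ) • tp a := by
  have h0 : Matrix.vecMulVec a p = Matrix.vecMulVec a p + Matrix.vecMulVec (0 : Fin 4 → ℂ) 0 := by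
    have : Matrix.vecMulVec (0 : Fin 4 → ℂ) (0 : Fin 4 → ℂ) = 0 := by
      ext i j; simp [Matrix.vecMulVec_apply]
    rw [this, add_zero]
  rw [h0, outer2_apply]
  have : tp (0 : Fin 4 → ℂ) = 0 := rfl
  simp [this]

lemma opNorm4_outer (a p : Fin 4 → ℂ) :
    opNorm4 (Matrix.vecMulVec a p) = ‖tp a‖ * ‖tp p‖ := by
  apply le_antisymm
  · apply ContinuousLinearMap.opNorm_le_bound _ (by positivity)
    intro x
    rw [outer1_apply, norm_smul]
    calc ‖(inner ℂ (tp (star p)) x : ℂ)‖ * ‖tp a‖ ≤ (‖tp (star p)‖ * ‖x‖) * ‖tp a‖ := by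
          gcongr; exact norm_inner_le_norm _ _
      _ = ‖tp a‖ * ‖tp p‖ * ‖x‖ := by rw [norm_tp_star]; ring
  · by_cases hp : tp p = 0
    · have hz : Matrix.vecMulVec a p = 0 := by
        rw [tp_eq_zero hp]; ext i j; simp [Matrix.vecMulVec_apply]
      rw [hz, hp]
      simp [opNorm4]
    · have hsp : ‖tp (star p)‖ = ‖tp p‖ := norm_tp_star p
      have hppos : (0:ℝ) < ‖tp p‖ := norm_pos_iff.mpr hp
      have hb := ContinuousLinearMap.le_opNorm
        (Matrix.toEuclideanCLM (𝕜 := ℂ) (Matrix.vecMulVec a p)) (tp (star p))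
      rw [outer1_apply, norm_smul] at hb
      have hin : ‖(inner ℂ (tp (star p)) (tp (star p)) : ℂ)‖ = ‖tp p‖ ^ 2 := by
        rw [@inner_self_eq_norm_sq_to_K ℂ, hsp]
        simp [Real.norm_of_nonneg (norm_nonneg _)]
      rw [hin, hsp] at hb
      show ‖tp a‖ * ‖tp p‖ ≤ ‖Matrix.toEuclideanCLM (𝕜 := ℂ) (Matrix.vecMulVec a p)‖
      nlinarith [hb, hppos]

lemma row_inner (M : Matrix (Fin 4) (Fin 4) ℂ) (v : Fin 4 → ℂ) (i : Fin 4) :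
    M.mulVec v i = inner ℂ (tp (star (M i))) (tp v) := by
  rw [inner_tp]
  simp [Matrix.mulVec, dotProduct]

lemma opNorm4_sq_le_hs (M : Matrix (Fin 4) (Fin 4) ℂ) :
    opNorm4 M ^ 2 ≤ ∑ i, ‖tp (M i)‖ ^ 2 := by
  have h : opNorm4 M ≤ Real.sqrt (∑ i, ‖tp (M i)‖ ^ 2) := by
    apply ContinuousLinearMap.opNorm_le_bound _ (Real.sqrt_nonneg _)
    intro x
    have hx : x = tp (WithLp.equiv 2 (Fin 4 → ℂ) x) := rfl
    have h2 : ‖Matrix.toEuclideanCLM (𝕜 := ℂ) M x‖^2 ≤ (∑ i, ‖tp (M i)‖ ^ 2) * ‖x‖^2 := by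
      rw [hx, clm_apply, norm_tp_sq, Finset.sum_mul]
      apply Finset.sum_le_sum
      intro i _
      rw [row_inner, ← hx]
      calc ‖(inner ℂ (tp (star (M i))) x : ℂ)‖^2 ≤ (‖tp (star (M i))‖ * ‖x‖)^2 := by
            gcongr; exact norm_inner_le_norm _ _
        _ = ‖tp (M i)‖ ^2 * ‖x‖^2 := by rw [norm_tp_star]; ring
    calc ‖Matrix.toEuclideanCLM (𝕜 := ℂ) M x‖
        = Real.sqrt (‖Matrix.toEuclideanCLM (𝕜 := ℂ) M x‖^2) := by
          rw [Real.sqrt_sq (norm_nonneg _)]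
      _ ≤ Real.sqrt ((∑ i, ‖tp (M i)‖ ^ 2) * ‖x‖^2) := Real.sqrt_le_sqrt h2
      _ = Real.sqrt (∑ i, ‖tp (M i)‖ ^ 2) * ‖x‖ := by
          rw [Real.sqrt_mul (by positivity), Real.sqrt_sq (norm_nonneg _)]
  calc opNorm4 M ^2 ≤ Real.sqrt (∑ i, ‖tp (M i)‖ ^ 2) ^2 := by
        gcongr; · exact (by unfold opNorm4; positivity)
    _ = ∑ i, ‖tp (M i)‖ ^ 2 := Real.sq_sqrt (by positivity)

lemma exists_max (T : E4 →L[ℂ] E4) : ∃ x : E4, ‖x‖ = 1 ∧ ‖T x‖ = ‖T‖ := by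
  have hcpt : IsCompact (Metric.sphere (0 : E4) 1) := isCompact_sphere _ _
  have hne : (Metric.sphere (0 : E4) 1).Nonempty := NormedSpace.sphere_nonempty.mpr zero_le_one
  obtain ⟨x₀, hx₀, hmax⟩ := hcpt.exists_isMaxOn hne
    ((continuous_norm.comp T.continuous).continuousOn)
  rw [Metric.mem_sphere, dist_zero_right] at hx₀
  refine ⟨x₀, hx₀, le_antisymm (by simpa [hx₀] using T.le_opNorm x₀) ?_⟩
  apply T.opNorm_le_bound (by positivity)
  intro x
  by_cases hx : x = 0
  · simp [hx]
  · have hxn : ‖x‖ ≠ 0 := norm_ne_zero_iff.mpr hx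
    have hmem : (‖x‖⁻¹ • x) ∈ Metric.sphere (0 : E4) 1 := by
      simp [norm_smul, abs_of_nonneg, inv_mul_cancel₀ hxn]
    have h2 : ‖T (‖x‖⁻¹ • x)‖ ≤ ‖T x₀‖ := hmax hmem
    rw [ContinuousLinearMap.map_smul_of_tower, norm_smul, norm_inv, norm_norm] at h2
    calc ‖T x‖ = ‖x‖ * (‖x‖⁻¹ * ‖T x‖) := by field_simp
      _ ≤ ‖x‖ * ‖T x₀‖ := by gcongr
      _ = ‖T x₀‖ * ‖x‖ := mul_comm _ _

lemma no_hs_equality (a c p q : Fin 4 → ℂ)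
    (hdet : ∃ i j, a i * c j - a j * c i ≠ 0)
    (hpq : ∀ α β : ℂ, α • p + β • q = 0 → α = 0 ∧ β = 0) :
    opNorm4 (Matrix.vecMulVec a p + Matrix.vecMulVec c q) ^ 2 ≠
      ∑ i, ‖tp (a i • p + c i • q)‖ ^ 2 := by
  intro heq
  set M := Matrix.vecMulVec a p + Matrix.vecMulVec c q with hM
  have hrow : ∀ i, M i = a i • p + c i • q := fun i => rfl
  obtain ⟨x₀, hx1, hx⟩ := exists_max (Matrix.toEuclideanCLM (𝕜 := ℂ) M)
  have hx0ne : x₀ ≠ 0 := by intro h; rw [h, norm_zero] at hx1; norm_num at hx1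
  -- each inner product attains its Cauchy-Schwarz bound
  have hTx : ‖Matrix.toEuclideanCLM (𝕜 := ℂ) M x₀‖ ^ 2
      = ∑ i, ‖(inner ℂ (tp (star (M i))) x₀ : ℂ)‖ ^ 2 := by
    have hv : x₀ = tp (WithLp.equiv 2 (Fin 4 → ℂ) x₀) := rfl
    rw [hv, clm_apply, norm_tp_sq]
    apply Finset.sum_congr rfl
    intro i _
    rw [row_inner]
  have hsum : ∑ i, ‖(inner ℂ (tp (star (M i))) x₀ : ℂ)‖ ^ 2 = ∑ i, ‖tp (M i)‖ ^ 2 := by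
    rw [← hTx, hx]
    show opNorm4 M ^ 2 = _
    rw [heq]
    apply Finset.sum_congr rfl
    intro i _
    rw [hrow]
  have hterm : ∀ i, ‖(inner ℂ (tp (star (M i))) x₀ : ℂ)‖ = ‖tp (star (M i))‖ := by
    have hle : ∀ i ∈ Finset.univ, ‖(inner ℂ (tp (star (M i))) x₀ : ℂ)‖ ^ 2 ≤ ‖tp (M i)‖ ^ 2 := by
      intro i _
      have := norm_inner_le_norm (𝕜 := ℂ) (tp (star (M i))) x₀
      rw [hx1, mul_one, norm_tp_star] at this
      have h0 : (0:ℝ) ≤ ‖(inner ℂ (tp (star (M i))) x₀ : ℂ)‖ := norm_nonneg _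
      nlinarith
    have heach : ∀ i, ‖(inner ℂ (tp (star (M i))) x₀ : ℂ)‖ ^ 2 = ‖tp (M i)‖ ^ 2 := by
      by_contra hcon
      push_neg at hcon
      obtain ⟨i₀, hi₀⟩ := hcon
      have hlt : ‖(inner ℂ (tp (star (M i₀))) x₀ : ℂ)‖ ^ 2 < ‖tp (M i₀)‖ ^ 2 :=
        lt_of_le_of_ne (hle i₀ (Finset.mem_univ _)) hi₀
      have := Finset.sum_lt_sum hle ⟨i₀, Finset.mem_univ _, hlt⟩
      rw [hsum] at this
      exact lt_irrefl _ this
    intro i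
    have := heach i
    rw [← norm_tp_star (M i)] at this
    have h1 : (0:ℝ) ≤ ‖(inner ℂ (tp (star (M i))) x₀ : ℂ)‖ := norm_nonneg _
    have h2 : (0:ℝ) ≤ ‖tp (star (M i))‖ := norm_nonneg _
    nlinarith
  obtain ⟨i, j, hij⟩ := hdet
  -- rows i and j are nonzero
  have hrowne : ∀ k, (a k ≠ 0 ∨ c k ≠ 0) → tp (star (M k)) ≠ 0 := by
    intro k hk h
    have h1 : star (M k) = 0 := tp_eq_zero h
    have h2 : M k = 0 := by
      have := congrArg star h1; rwa [star_star, star_zero] at this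
    rw [hrow] at h2
    obtain ⟨ha0, hc0⟩ := hpq _ _ h2
    rcases hk with h | h; exacts [h ha0, h hc0]
  have hine : a i ≠ 0 ∨ c i ≠ 0 := by
    by_contra h; push_neg at h; rw [h.1, h.2] at hij; simp at hij
  have hjne : a j ≠ 0 ∨ c j ≠ 0 := by
    by_contra h; push_neg at h; rw [h.1, h.2] at hij; simp at hij
  -- Cauchy-Schwarz equality: x₀ is a multiple of each row
  have hcol : ∀ k, (a k ≠ 0 ∨ c k ≠ 0) → ∃ r : ℂ, r ≠ 0 ∧ x₀ = r • tp (star (M k)) := by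
    intro k hk
    apply (norm_inner_eq_norm_iff (hrowne k hk) hx0ne).mp
    rw [hx1, mul_one]; exact hterm k
  obtain ⟨r, hr, hxr⟩ := hcol i hine
  obtain ⟨s, hs, hxs⟩ := hcol j hjne
  have hrs : ∀ k : Fin 4, r * conj (M i k) = s * conj (M j k) := by
    intro k
    have h := hxr.symm.trans hxs
    have := congrArg (fun y : E4 => y k) h
    simpa [tp_apply, Pi.star_apply] using this
  have hrs' : (conj r) • (M i) = (conj s) • (M j) := by
    funext k
    have := congrArg conj (hrs k)
    simpa [map_mul] using this
  rw [hrow i, hrow j] at hrs'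
  have hcomb : (conj r * a i - conj s * a j) • p + (conj r * c i - conj s * c j) • q = 0 := by
    have : (conj r * a i) • p + (conj r * c i) • q = (conj s * a j) • p + (conj s * c j) • q := by
      have h1 : (conj r) • (a i • p + c i • q) = (conj r * a i) • p + (conj r * c i) • q := by
        rw [smul_add, smul_smul, smul_smul]
      have h2 : (conj s) • (a j • p + c j • q) = (conj s * a j) • p + (conj s * c j) • q := by
        rw [smul_add, smul_smul, smul_smul]
      rw [← h1, ← h2, hrs']
    rw [sub_smul, sub_smul]
    funext k
    have := congrFun this k
    simp only [Pi.add_apply, Pi.smul_apply, smul_eq_mul, Pi.sub_apply, Pi.zero_apply] at this ⊢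
    linear_combination this
  obtain ⟨e1, e2⟩ := hpq _ _ hcomb
  have e1' : conj r * a i = conj s * a j := by linear_combination e1
  have e2' : conj r * c i = conj s * c j := by linear_combination e2
  have : conj r * (a i * c j - a j * c i) = 0 := by
    linear_combination c j * e1' - a j * e2'
  rcases mul_eq_zero.mp this with h | h
  · exact hr (by simpa using congrArg conj h)
  · exact hij h

lemma tp_smul (z : ℂ) (v : Fin 4 → ℂ) : tp (z • v) = z • tp v := rfl

lemma tp_comb (z₁ z₂ : ℂ) (v w : Fin 4 → ℂ) :
    tp (z₁ • v + z₂ • w) = z₁ • tp v + z₂ • tp w := rfl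

lemma norm_comb_sq (z₁ z₂ : ℂ) (v w : Fin 4 → ℂ) :
    ‖tp (z₁ • v + z₂ • w)‖ ^ 2
      = ‖z₁‖ ^ 2 * ‖tp v‖ ^ 2 + ‖z₂‖ ^ 2 * ‖tp w‖ ^ 2
        + 2 * (conj z₁ * z₂ * (inner ℂ (tp v) (tp w) : ℂ)).re := by
  rw [tp_comb, @norm_add_sq ℂ]
  rw [inner_smul_left, inner_smul_right, norm_smul, norm_smul]
  simp only [RCLike.re_to_complex]
  ring_nf

lemma hs_sum_outer2 (a c p q : Fin 4 → ℂ) :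
    ∑ i, ‖tp (a i • p + c i • q)‖ ^ 2
      = ‖tp a‖ ^ 2 * ‖tp p‖ ^ 2 + ‖tp c‖ ^ 2 * ‖tp q‖ ^ 2
        + 2 * ((inner ℂ (tp a) (tp c) : ℂ) * (inner ℂ (tp p) (tp q) : ℂ)).re := by
  have h1 : ∀ i, ‖tp (a i • p + c i • q)‖ ^ 2
      = ‖a i‖ ^ 2 * ‖tp p‖ ^ 2 + ‖c i‖ ^ 2 * ‖tp q‖ ^ 2
        + 2 * (conj (a i) * c i * (inner ℂ (tp p) (tp q) : ℂ)).re :=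
    fun i => norm_comb_sq (a i) (c i) p q
  rw [Finset.sum_congr rfl fun i _ => h1 i]
  rw [Finset.sum_add_distrib, Finset.sum_add_distrib]
  rw [← Finset.sum_mul, ← Finset.sum_mul, ← norm_tp_sq, ← norm_tp_sq]
  congr 1
  rw [← Finset.mul_sum, ← Complex.re_sum, ← Finset.sum_mul, inner_tp]
  rw [inner_tp]

lemma matconjA (X W : Matrix (Fin 4) (Fin 4) ℂ) (z₁ z₂ : ℂ) :
    X * matA 0 z₁ z₂ * W
      = Matrix.vecMulVec (fun i => X i 0) (z₁ • W 2 + z₂ • W 3) := by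
  ext i j
  simp [Matrix.mul_apply, Fin.sum_univ_four, matA, Matrix.vecMulVec_apply,
    Matrix.vecHead, Matrix.vecTail, Function.comp]
  ring

lemma matconjB (Y W : Matrix (Fin 4) (Fin 4) ℂ) (z₁ z₂ : ℂ) :
    Y * matB 0 z₁ z₂ * W
      = Matrix.vecMulVec (fun i => Y i 0) (z₁ • W 2)
        + Matrix.vecMulVec (fun i => Y i 1) (z₂ • W 3) := by
  ext i j
  simp [Matrix.mul_apply, Fin.sum_univ_four, matB, Matrix.vecMulVec_apply,
    Matrix.vecHead, Matrix.vecTail, Function.comp]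
  ring

lemma cols_det {Y W : Matrix (Fin 4) (Fin 4) ℂ} (hWY : W * Y = 1) :
    ∃ i j, Y i 0 * Y j 1 - Y j 0 * Y i 1 ≠ 0 := by
  by_contra h
  push_neg at h
  have h' : ∀ i j, Y i 0 * Y j 1 = Y j 0 * Y i 1 := by
    intro i j; have := h i j; linear_combination this
  have hmul : ∀ (k l : Fin 4), (∑ m, W k m * Y m l) = (1 : Matrix (Fin 4) (Fin 4) ℂ) k l := by
    intro k l; rw [← Matrix.mul_apply, hWY]
  by_cases ha : ∀ k, Y k 0 = 0
  · have h00 := hmul 0 0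
    simp [ha, Matrix.one_apply] at h00
  · push_neg at ha
    obtain ⟨i₀, hi₀⟩ := ha
    have hc : ∀ k, Y k 1 = (Y i₀ 1 / Y i₀ 0) * Y k 0 := by
      intro k
      rw [div_mul_eq_mul_div, eq_div_iff hi₀]
      linear_combination h' i₀ k
    have h11 := hmul 1 1
    have h10 := hmul 1 0
    rw [Matrix.one_apply_eq] at h11
    rw [Matrix.one_apply_ne (by decide : (1 : Fin 4) ≠ 0)] at h10
    rw [Finset.sum_congr rfl (fun k _ => by rw [hc k])] at h11
    have : ∑ k, W 1 k * (Y i₀ 1 / Y i₀ 0 * Y k 0)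
        = (Y i₀ 1 / Y i₀ 0) * ∑ k, W 1 k * Y k 0 := by
      rw [Finset.mul_sum]; apply Finset.sum_congr rfl; intro k _; ring
    rw [this, h10, mul_zero] at h11
    exact one_ne_zero h11.symm

lemma rows_indep {Y W : Matrix (Fin 4) (Fin 4) ℂ} (hWY : W * Y = 1) :
    ∀ α β : ℂ, α • W 2 + β • W 3 = 0 → α = 0 ∧ β = 0 := by
  intro α β hαβ
  have hmul : ∀ (k l : Fin 4), (∑ m, W k m * Y m l) = (1 : Matrix (Fin 4) (Fin 4) ℂ) k l := by
    intro k l; rw [← Matrix.mul_apply, hWY]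
  have key : ∀ l : Fin 4, α * (1 : Matrix (Fin 4) (Fin 4) ℂ) 2 l + β * (1 : Matrix (Fin 4) (Fin 4) ℂ) 3 l = 0 := by
    intro l
    rw [← hmul 2 l, ← hmul 3 l, Finset.mul_sum, Finset.mul_sum, ← Finset.sum_add_distrib]
    have : ∀ m, α * (W 2 m * Y m l) + β * (W 3 m * Y m l) = ((α • W 2 + β • W 3) m) * Y m l := by
      intro m; simp only [Pi.add_apply, Pi.smul_apply, smul_eq_mul]; ring
    rw [Finset.sum_congr rfl (fun m _ => this m), hαβ]
    simp
  constructor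
  · have := key 2
    rw [Matrix.one_apply_eq, Matrix.one_apply_ne (by decide : (3 : Fin 4) ≠ 2)] at this
    simpa using this
  · have := key 3
    rw [Matrix.one_apply_eq, Matrix.one_apply_ne (by decide : (2 : Fin 4) ≠ 3)] at this
    simpa using this

lemma outer2_le (a c p q : Fin 4 → ℂ) :
    opNorm4 (Matrix.vecMulVec a p + Matrix.vecMulVec c q) ^ 2
      ≤ ‖tp a‖ ^ 2 * ‖tp p‖ ^ 2 + ‖tp c‖ ^ 2 * ‖tp q‖ ^ 2
        + 2 * ((inner ℂ (tp a) (tp c) : ℂ) * (inner ℂ (tp p) (tp q) : ℂ)).re := by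
  calc opNorm4 (Matrix.vecMulVec a p + Matrix.vecMulVec c q) ^ 2
      ≤ ∑ i, ‖tp ((Matrix.vecMulVec a p + Matrix.vecMulVec c q) i)‖ ^ 2 := opNorm4_sq_le_hs _
    _ = ∑ i, ‖tp (a i • p + c i • q)‖ ^ 2 := rfl
    _ = _ := hs_sum_outer2 a c p q

/-- **Section 3 counter-example**: no pair of invertible `X, Y ∈ M₄(ℂ)` makes the unital
completely bounded isomorphism `Ψ : matA l z₁ z₂ ↦ matB l z₁ z₂` spatially isometric. -/
theorem stmt12 (X Y : (Matrix (Fin 4) (Fin 4) ℂ)ˣ) :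
    ∃ l z₁ z₂ : ℂ,
      opNorm4 ((X : Matrix (Fin 4) (Fin 4) ℂ) * matA l z₁ z₂ * (↑X⁻¹ : Matrix (Fin 4) (Fin 4) ℂ)) ≠
        opNorm4 ((Y : Matrix (Fin 4) (Fin 4) ℂ) * matB l z₁ z₂ * (↑Y⁻¹ : Matrix (Fin 4) (Fin 4) ℂ)) := by
  by_contra hcon
  push_neg at hcon
  set V : Matrix (Fin 4) (Fin 4) ℂ := (↑X⁻¹ : Matrix (Fin 4) (Fin 4) ℂ) with hV
  set W : Matrix (Fin 4) (Fin 4) ℂ := (↑Y⁻¹ : Matrix (Fin 4) (Fin 4) ℂ) with hW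
  have hWY : W * (Y : Matrix (Fin 4) (Fin 4) ℂ) = 1 := Y.inv_mul
  set u : Fin 4 → ℂ := fun i => (X : Matrix (Fin 4) (Fin 4) ℂ) i 0 with hu
  set a : Fin 4 → ℂ := fun i => (Y : Matrix (Fin 4) (Fin 4) ℂ) i 0 with ha
  set c : Fin 4 → ℂ := fun i => (Y : Matrix (Fin 4) (Fin 4) ℂ) i 1 with hc
  set r3 : Fin 4 → ℂ := V 2 with hr3
  set r4 : Fin 4 → ℂ := V 3 with hr4
  set s3 : Fin 4 → ℂ := W 2 with hs3
  set s4 : Fin 4 → ℂ := W 3 with hs4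
  have hF : ∀ z₁ z₂ : ℂ, opNorm4 ((X : Matrix (Fin 4) (Fin 4) ℂ) * matA 0 z₁ z₂ * V)
      = ‖tp u‖ * ‖tp (z₁ • r3 + z₂ • r4)‖ := by
    intro z₁ z₂; rw [matconjA, opNorm4_outer]
  have hGB : ∀ z₁ z₂ : ℂ, (Y : Matrix (Fin 4) (Fin 4) ℂ) * matB 0 z₁ z₂ * W
      = Matrix.vecMulVec a (z₁ • s3) + Matrix.vecMulVec c (z₂ • s4) := by
    intro z₁ z₂; rw [matconjB]
  have hvz : ∀ b : Fin 4 → ℂ, Matrix.vecMulVec b ((0:ℂ) • s4) = 0 := by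
    intro b; ext i j; simp [Matrix.vecMulVec_apply]
  have hvz3 : ∀ b : Fin 4 → ℂ, Matrix.vecMulVec b ((0:ℂ) • s3) = 0 := by
    intro b; ext i j; simp [Matrix.vecMulVec_apply]
  -- the two diagonal norm equalities
  have hA : ‖tp u‖ * ‖tp r3‖ = ‖tp a‖ * ‖tp s3‖ := by
    have h := hcon 0 1 0
    rw [hF 1 0, hGB 1 0, hvz, add_zero, opNorm4_outer] at h
    rw [show (1:ℂ) • r3 + (0:ℂ) • r4 = r3 from by funext k; simp,
      show (1:ℂ) • s3 = s3 from one_smul _ _] at h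
    exact h
  have hC : ‖tp u‖ * ‖tp r4‖ = ‖tp c‖ * ‖tp s4‖ := by
    have h := hcon 0 0 1
    rw [hF 0 1, hGB 0 1, hvz3, zero_add, opNorm4_outer] at h
    rw [show (0:ℂ) • r3 + (1:ℂ) • r4 = r4 from by funext k; simp,
      show (1:ℂ) • s4 = s4 from one_smul _ _] at h
    exact h
  set ν : ℝ := ‖tp u‖
  set ipac : ℂ := inner ℂ (tp a) (tp c)
  set ipr : ℂ := inner ℂ (tp r3) (tp r4)
  set ips : ℂ := inner ℂ (tp s3) (tp s4)
  set γ : ℂ := ipac * ips - (ν : ℂ) ^ 2 * ipr with hγ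
  -- step 1 : γ = 0
  have hγ0 : γ = 0 := by
    set w : ℂ := -(conj γ) with hwdef
    have hL : opNorm4 ((X : Matrix (Fin 4) (Fin 4) ℂ) * matA 0 1 w * V) ^ 2
        = ν ^ 2 * ‖tp ((1:ℂ) • r3 + w • r4)‖ ^ 2 := by rw [hF 1 w, mul_pow]
    rw [norm_comb_sq] at hL
    simp only [norm_one, one_pow, map_one, one_mul] at hL
    have hR : opNorm4 ((Y : Matrix (Fin 4) (Fin 4) ℂ) * matB 0 1 w * W) ^ 2
        ≤ ‖tp a‖ ^ 2 * ‖tp s3‖ ^ 2 + ‖tp c‖ ^ 2 * (‖w‖ ^ 2 * ‖tp s4‖ ^ 2)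
          + 2 * (ipac * (w * ips)).re := by
      have := outer2_le a c ((1:ℂ) • s3) (w • s4)
      rw [one_smul] at this
      have e1 : ‖tp (w • s4)‖ = ‖w‖ * ‖tp s4‖ := by rw [tp_smul, norm_smul]
      have e2 : (inner ℂ (tp s3) (tp (w • s4)) : ℂ) = w * ips := by
        rw [tp_smul, inner_smul_right]
      rw [e1, e2, mul_pow] at this
      rw [hGB 1 w, one_smul]
      exact this
    have hEq := hcon 0 1 w
    rw [← hEq] at hR
    rw [hL] at hR
    have hA2 : ν ^ 2 * ‖tp r3‖ ^ 2 = ‖tp a‖ ^ 2 * ‖tp s3‖ ^ 2 := by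
      have := congrArg (fun t : ℝ => t ^ 2) hA
      simp only [mul_pow] at this
      exact this
    have hC2 : ν ^ 2 * ‖tp r4‖ ^ 2 = ‖tp c‖ ^ 2 * ‖tp s4‖ ^ 2 := by
      have := congrArg (fun t : ℝ => t ^ 2) hC
      simp only [mul_pow] at this
      exact this
    have hkey : ν ^ 2 * (2 * (w * ipr).re) ≤ 2 * (ipac * (w * ips)).re := by nlinarith [hR, hA2, hC2]
    have hre : (ipac * (w * ips)).re - ν ^ 2 * (w * ipr).re = -Complex.normSq γ := by
      have h1 : ν ^ 2 * (w * ipr).re = (((ν:ℝ)^2 : ℂ) * (w * ipr)).re := by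
        rw [show (((ν:ℝ)^2 : ℂ)) = ((ν^2 : ℝ) : ℂ) by norm_cast]
        rw [Complex.re_ofReal_mul]
      rw [h1, ← Complex.sub_re]
      have h2 : ipac * (w * ips) - ((ν:ℝ)^2 : ℂ) * (w * ipr) = γ * w := by
        rw [hγ]; push_cast; ring
      rw [h2, hwdef]
      have h3 : γ * -(conj γ) = -((Complex.normSq γ : ℂ)) := by
        rw [← Complex.mul_conj]; ring
      rw [h3]
      simp
    have : (0:ℝ) ≤ -Complex.normSq γ := by nlinarith [hkey, hre]
    have h4 : Complex.normSq γ = 0 := le_antisymm (by linarith) (Complex.normSq_nonneg γ)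
    exact Complex.normSq_eq_zero.mp h4
  -- step 2 : equality with the Hilbert-Schmidt value at (1,1), contradiction
  have hγ0' : ipac * ips = (ν : ℂ) ^ 2 * ipr := by
    have := hγ0; rw [hγ] at this; linear_combination this
  have hA2 : ν ^ 2 * ‖tp r3‖ ^ 2 = ‖tp a‖ ^ 2 * ‖tp s3‖ ^ 2 := by
    have := congrArg (fun t : ℝ => t ^ 2) hA
    simp only [mul_pow] at this
    exact this
  have hC2 : ν ^ 2 * ‖tp r4‖ ^ 2 = ‖tp c‖ ^ 2 * ‖tp s4‖ ^ 2 := by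
    have := congrArg (fun t : ℝ => t ^ 2) hC
    simp only [mul_pow] at this
    exact this
  have hfin : opNorm4 (Matrix.vecMulVec a s3 + Matrix.vecMulVec c s4) ^ 2
      = ∑ i, ‖tp (a i • s3 + c i • s4)‖ ^ 2 := by
    have hEq := hcon 0 1 1
    rw [hF 1 1, hGB 1 1] at hEq
    rw [show (1:ℂ) • s3 = s3 from one_smul _ _, show (1:ℂ) • s4 = s4 from one_smul _ _] at hEq
    rw [← hEq, mul_pow, norm_comb_sq]
    simp only [norm_one, one_pow, map_one, one_mul]
    rw [hs_sum_outer2]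
    have hip : (ipac * ips).re = ν ^ 2 * ipr.re := by
      rw [hγ0']
      rw [show (((ν:ℝ) : ℂ)^2) = ((ν^2 : ℝ) : ℂ) by norm_cast]
      rw [Complex.re_ofReal_mul]
    rw [hip]
    nlinarith [hA2, hC2]
  exact no_hs_equality a c s3 s4 (cols_det hWY) (rows_indep hWY) hfin

end
end

section
/- Let λ ∈ 𝔻 and let u : 𝔻 → ℂ be a bounded holomorphic function on the open unit disc 𝔻. Define θ(z) = ((z − λ)/(1 − conj(λ)·z)) · u(z) for z ∈ 𝔻. Then the set {w ∈ ℂ : inf_{z ∈ 𝔻} (|u(z) − w| + |θ(z)|) = 0} is contained in {u(λ), 0}. -/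
open Metric

/-- **Lemma 4.1 (ii)** (function-theoretic form): if `λ ∈ 𝔻`, `u` is bounded holomorphic on
`𝔻` and `θ = b_λ · u` where `b_λ(z) = (z − λ)/(1 − conj(λ)z)`, then
`{w : inf_{z∈𝔻}(|u(z)−w| + |θ(z)|) = 0} ⊆ {u(λ), 0}`. -/
theorem stmt14 (l : ℂ) (hl : l ∈ ball (0 : ℂ) 1) (u : ℂ → ℂ)
    (hu : DifferentiableOn ℂ u (ball (0 : ℂ) 1))
    (hub : ∃ C : ℝ, ∀ z ∈ ball (0 : ℂ) 1, ‖u z‖ ≤ C)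
    (θ : ℂ → ℂ)
    (hθ : ∀ z : ℂ, θ z = (z - l) / (1 - (starRingEnd ℂ) l * z) * u z) :
    {w : ℂ | sInf ((fun z => ‖u z - w‖ + ‖θ z‖) '' ball (0 : ℂ) 1)
        = 0} ⊆ {u l, 0} := by
  intro w hw
  simp only [Set.mem_setOf_eq] at hw
  by_contra hcon
  simp only [Set.mem_insert_iff, Set.mem_singleton_iff, not_or] at hcon
  obtain ⟨hwu, hw0⟩ := hcon
  have hl1 : ‖l‖ < 1 := by simpa using hl
  have hcont : ContinuousAt u l :=
    (hu.differentiableAt (isOpen_ball.mem_nhds hl)).continuousAt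
  have hd : 0 < ‖w - u l‖ := norm_pos_iff.mpr (sub_ne_zero.mpr hwu)
  have hwpos : 0 < ‖w‖ := norm_pos_iff.mpr hw0
  obtain ⟨r, hr, hr'⟩ := Metric.continuousAt_iff.mp hcont (‖w - u l‖ / 2)
    (by positivity)
  set R : ℝ := min r 1 with hR
  have hRpos : 0 < R := lt_min hr one_pos
  have hR1 : R ≤ 1 := min_le_right _ _
  set c : ℝ := min (‖w - u l‖ / 2) (R * ‖w‖ / 4) with hc
  have hcpos : 0 < c := lt_min (by positivity) (by positivity)
  have hlb : ∀ y ∈ (fun z => ‖u z - w‖ + ‖θ z‖) '' ball (0 : ℂ) 1,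
      c ≤ y := by
    rintro y ⟨z, hz, rfl⟩
    show c ≤ ‖u z - w‖ + ‖θ z‖
    have hz1 : ‖z‖ < 1 := by simpa using hz
    by_cases hzl : dist z l < r
    · -- z close to l, so u z close to u l, far from w
      have h1 : ‖u z - u l‖ < ‖w - u l‖ / 2 := by
        have := hr' hzl
        rwa [Complex.dist_eq] at this
      have htri := norm_add_le (w - u z) (u z - u l)
      have he : (w - u z) + (u z - u l) = w - u l := by ring
      rw [he] at htri
      rw [norm_sub_rev w (u z)] at htri
      have h2 : ‖w - u l‖ / 2 ≤ ‖u z - w‖ := by linarith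
      have := norm_nonneg (θ z)
      have hcle : c ≤ ‖w - u l‖ / 2 := min_le_left _ _
      linarith
    · -- z far from l
      push_neg at hzl
      have hcle : c ≤ R * ‖w‖ / 4 := min_le_right _ _
      by_cases huw : ‖u z - w‖ < ‖w‖ / 2
      · -- then |u z| ≥ |w|/2 and |b z| ≥ R/2
        have huzl : ‖w‖ / 2 ≤ ‖u z‖ := by
          have htri := norm_add_le (w - u z) (u z)
          have he : (w - u z) + u z = w := by ring
          rw [he, norm_sub_rev w (u z)] at htri
          linarith
        have habs : ‖(starRingEnd ℂ) l * z‖ ≤ 1 := by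
          rw [norm_mul, Complex.norm_conj]
          nlinarith [norm_nonneg l, norm_nonneg z]
        have hden : ‖1 - (starRingEnd ℂ) l * z‖ ≤ 2 := by
          have h5 := norm_add_le 1 (-((starRingEnd ℂ) l * z))
          rw [← sub_eq_add_neg, norm_neg] at h5
          simp only [norm_one] at h5
          linarith
        have hdenpos : 0 < ‖1 - (starRingEnd ℂ) l * z‖ := by
          have habs' : ‖(starRingEnd ℂ) l * z‖ < 1 := by
            rw [norm_mul, Complex.norm_conj]
            nlinarith [norm_nonneg l, norm_nonneg z]
          have h4 : (1:ℝ) - ‖(starRingEnd ℂ) l * z‖ ≤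
              ‖1 - (starRingEnd ℂ) l * z‖ := by
            simpa using norm_sub_norm_le (1 : ℂ) ((starRingEnd ℂ) l * z)
          linarith
        have hnum : R ≤ ‖z - l‖ := by
          rw [← Complex.dist_eq]
          exact le_trans (min_le_left _ _) hzl
        have hb : R / 2 ≤ ‖(z - l) / (1 - (starRingEnd ℂ) l * z)‖ := by
          rw [norm_div, le_div_iff₀ hdenpos]
          nlinarith [norm_nonneg (z - l)]
        have hθz : R * ‖w‖ / 4 ≤ ‖θ z‖ := by
          rw [hθ z, norm_mul]
          have : (R / 2) * (‖w‖ / 2) ≤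
              ‖(z - l) / (1 - (starRingEnd ℂ) l * z)‖ * ‖u z‖ := by
            apply mul_le_mul hb huzl (by positivity)
            exact le_trans (by positivity) hb
          linarith
        have := norm_nonneg (u z - w)
        linarith
      · push_neg at huw
        have h6 : R * ‖w‖ / 4 ≤ ‖w‖ / 2 := by nlinarith
        have := norm_nonneg (θ z)
        linarith
  have hne : ((fun z => ‖u z - w‖ + ‖θ z‖) '' ball (0 : ℂ) 1).Nonempty :=
    ⟨_, ⟨0, by simpa using one_pos, rfl⟩⟩
  have := le_csInf hne hlb
  rw [hw] at this
  linarith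
end

section
/- Let A ⊆ B(H) be a unital operator algebra containing every bounded operator on H of rank at most one. Then for every invertible X ∈ B(H), the completely bounded norm of the conjugation map a ↦ X a X⁻¹ restricted to A equals ‖X‖·‖X⁻¹‖; in particular A has the conjugation with lower bound property with constant δ = 1. -/
section Aux
variable {H : Type*} [NormedAddCommGroup H] [NormedSpace ℂ H]

/-- The operator on `H^d` (with the `ℓ²` norm) given by a matrix of operators. -/
noncomputable def matCLM {d : ℕ} (M : Matrix (Fin d) (Fin d) (H →L[ℂ] H)) :
    PiLp 2 (fun _ : Fin d => H) →L[ℂ] PiLp 2 (fun _ : Fin d => H) :=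
  (PiLp.continuousLinearEquiv 2 ℂ (fun _ : Fin d => H)).symm.toContinuousLinearMap.comp
      ((ContinuousLinearMap.pi fun i => ∑ j, (M i j).comp (ContinuousLinearMap.proj j)).comp
        (PiLp.continuousLinearEquiv 2 ℂ (fun _ : Fin d => H)).toContinuousLinearMap)

lemma matOpNorm_eq_norm_matCLM {d : ℕ} (M : Matrix (Fin d) (Fin d) (H →L[ℂ] H)) :
    matOpNorm M = ‖matCLM M‖ := rfl

lemma matCLM_apply {d : ℕ} (M : Matrix (Fin d) (Fin d) (H →L[ℂ] H))
    (x : PiLp 2 (fun _ : Fin d => H)) (i : Fin d) :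
    matCLM M x i = ∑ j, M i j (x j) := by
  simp [matCLM, ContinuousLinearMap.pi_apply, ContinuousLinearMap.sum_apply]

lemma matCLM_diag_apply {d : ℕ} (X : H →L[ℂ] H)
    (x : PiLp 2 (fun _ : Fin d => H)) (i : Fin d) :
    matCLM (fun i j => if i = j then X else 0) x i = X (x i) := by
  rw [matCLM_apply (fun i j => if i = j then X else 0), Finset.sum_eq_single i
    (fun b _ hb => by rw [if_neg fun h => hb h.symm]; rfl)
    (fun h => absurd (Finset.mem_univ i) h), if_pos rfl]

lemma matCLM_conj {d : ℕ} (X Y : H →L[ℂ] H) (M : Matrix (Fin d) (Fin d) (H →L[ℂ] H)) :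
    matCLM (fun i j => X * M i j * Y) =
      (matCLM (fun i j => if i = j then X else 0)).comp
        ((matCLM M).comp (matCLM (fun i j => if i = j then Y else 0))) := by
  ext x i
  rw [ContinuousLinearMap.comp_apply, ContinuousLinearMap.comp_apply,
    matCLM_diag_apply, matCLM_apply, matCLM_apply (fun i j => X * M i j * Y), map_sum]
  refine Finset.sum_congr rfl fun j _ => ?_
  rw [matCLM_diag_apply]
  rfl

lemma norm_matCLM_diag_le {d : ℕ} (X : H →L[ℂ] H) :
    ‖matCLM (fun i j : Fin d => if i = j then X else 0)‖ ≤ ‖X‖ := by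
  refine ContinuousLinearMap.opNorm_le_bound _ (norm_nonneg X) fun x => ?_
  rw [PiLp.norm_eq_of_L2, PiLp.norm_eq_of_L2]
  have h1 : ∀ i, ‖matCLM (fun i j : Fin d => if i = j then X else 0) x i‖ ^ 2
      ≤ ‖X‖ ^ 2 * ‖x i‖ ^ 2 := by
    intro i
    rw [matCLM_diag_apply, ← mul_pow]
    exact pow_le_pow_left₀ (norm_nonneg _) (X.le_opNorm (x i)) 2
  calc √(∑ i, ‖matCLM (fun i j : Fin d => if i = j then X else 0) x i‖ ^ 2)
      ≤ √(∑ i, ‖X‖ ^ 2 * ‖x i‖ ^ 2) :=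
        Real.sqrt_le_sqrt (Finset.sum_le_sum fun i _ => h1 i)
    _ = ‖X‖ * √(∑ i, ‖x i‖ ^ 2) := by
        rw [← Finset.mul_sum, Real.sqrt_mul (sq_nonneg _), Real.sqrt_sq (norm_nonneg _)]

lemma matOpNorm_fin_one (a : H →L[ℂ] H) :
    matOpNorm (fun _ _ : Fin 1 => a) = ‖a‖ := by
  erw [matOpNorm_eq_norm_matCLM]
  refine le_antisymm ?_ ?_
  · refine ContinuousLinearMap.opNorm_le_bound _ (norm_nonneg a) fun x => ?_
    rw [PiLp.norm_eq_of_L2, PiLp.norm_eq_of_L2]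
    simp only [Fin.sum_univ_one, Real.sqrt_sq (norm_nonneg _), matCLM_apply (fun _ _ : Fin 1 => a)]
    simpa using a.le_opNorm (x 0)
  · refine ContinuousLinearMap.opNorm_le_bound _ (norm_nonneg _) fun v => ?_
    set x : PiLp 2 (fun _ : Fin 1 => H) := (WithLp.equiv 2 _).symm (fun _ => v) with hx
    have hxn : ‖x‖ = ‖v‖ := by
      rw [PiLp.norm_eq_of_L2]
      simp [hx, Real.sqrt_sq (norm_nonneg _)]
    have h1 : ‖a v‖ = ‖matCLM (fun _ _ : Fin 1 => a) x‖ := by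
      rw [PiLp.norm_eq_of_L2]
      simp only [Fin.sum_univ_one, Real.sqrt_sq (norm_nonneg _), matCLM_apply (fun _ _ : Fin 1 => a)]
      simp [hx]
    rw [h1, ← hxn]
    exact (matCLM _).le_opNorm x

lemma matOpNorm_of_subsingleton {d : ℕ} [Subsingleton (PiLp 2 (fun _ : Fin d => H))]
    (M : Matrix (Fin d) (Fin d) (H →L[ℂ] H)) : matOpNorm M = 0 := by
  rw [matOpNorm_eq_norm_matCLM]
  have : matCLM M = 0 := by
    ext x
    exact congrFun (congrArg WithLp.ofLp (Subsingleton.elim _ _)) _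
  rw [this, norm_zero]

end Aux

/-- **Section 5, final remark**: if a unital operator algebra `A ⊆ B(H)` contains every
operator of rank at most one, then for every invertible `X ∈ B(H)` the cb norm of
`a ↦ X a X⁻¹` on `A` equals `‖X‖ ‖X⁻¹‖`; in particular `A` has the conjugation with lower
bound property with constant `δ = 1`. -/
theorem stmt17
    {H : Type*} [NormedAddCommGroup H] [InnerProductSpace ℂ H] [CompleteSpace H]
    (A : Subalgebra ℂ (H →L[ℂ] H))
    (hrank : ∀ y z : H, ((innerSL ℂ y).smulRight z) ∈ A) :
    ∀ X : (H →L[ℂ] H)ˣ,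
      cbNormRel (fun a : A => (a : H →L[ℂ] H))
          (fun a : A => (X : H →L[ℂ] H) * (a : H →L[ℂ] H) * (↑X⁻¹ : H →L[ℂ] H)) =
        ‖(X : H →L[ℂ] H)‖ * ‖(↑X⁻¹ : H →L[ℂ] H)‖ := by
  intro X
  set Xc : H →L[ℂ] H := (X : H →L[ℂ] H) with hXc
  set Yc : H →L[ℂ] H := (↑X⁻¹ : H →L[ℂ] H) with hYc
  set c : ℝ := ‖Xc‖ * ‖Yc‖ with hc
  set S : Set ℝ := { r : ℝ | ∃ (d : ℕ) (M : Matrix (Fin d) (Fin d) A),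
    matOpNorm (fun i j => ((M i j : A) : H →L[ℂ] H)) ≤ 1 ∧
      r = matOpNorm (fun i j => Xc * ((M i j : A) : H →L[ℂ] H) * Yc) } with hS
  have hsub : ∀ d : ℕ, d = 0 → Subsingleton (PiLp 2 (fun _ : Fin d => H)) := by
    intro d hd
    subst hd
    exact ⟨fun a b => PiLp.ext fun i => (i : Fin 0).elim0⟩
  have h0 : (0 : ℝ) ∈ S := by
    have : Subsingleton (PiLp 2 (fun _ : Fin 0 => H)) := hsub 0 rfl
    exact ⟨0, fun i _ => i.elim0, by erw [matOpNorm_of_subsingleton]; exact zero_le_one,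
      (matOpNorm_of_subsingleton _).symm⟩
  have hub : ∀ r ∈ S, r ≤ c := by
    rintro r ⟨d, M, h1, rfl⟩
    erw [matOpNorm_eq_norm_matCLM, matCLM_conj]
    calc ‖(matCLM fun i j : Fin d => if i = j then Xc else 0).comp
          ((matCLM fun i j => ((M i j : A) : H →L[ℂ] H)).comp
            (matCLM fun i j : Fin d => if i = j then Yc else 0))‖
        ≤ ‖matCLM fun i j : Fin d => if i = j then Xc else 0‖ *
          (‖matCLM fun i j => ((M i j : A) : H →L[ℂ] H)‖ *
            ‖matCLM fun i j : Fin d => if i = j then Yc else 0‖) :=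
          le_trans (ContinuousLinearMap.opNorm_comp_le _ _)
            (by gcongr; exact ContinuousLinearMap.opNorm_comp_le _ _)
      _ ≤ ‖Xc‖ * (1 * ‖Yc‖) := by
          have h2 := norm_matCLM_diag_le (d := d) Xc
          have h3 := norm_matCLM_diag_le (d := d) Yc
          have h4 : ‖matCLM fun i j => ((M i j : A) : H →L[ℂ] H)‖ ≤ 1 := by
            exact h1
          gcongr <;> positivity
      _ = c := by rw [one_mul]
  have hbdd : BddAbove S := ⟨c, hub⟩
  have hne : S.Nonempty := ⟨0, h0⟩
  refine le_antisymm (csSup_le hne hub) ?_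
  show c ≤ sSup S
  rw [le_csSup_iff hbdd hne]
  intro b hb
  by_contra hbc
  push_neg at hbc
  have hb0 : (0 : ℝ) ≤ b := hb h0
  have hYpos : 0 < ‖Yc‖ := by
    rcases (norm_nonneg Yc).lt_or_eq with h | h
    · exact h
    · exfalso; rw [hc, ← h, mul_zero] at hbc; exact absurd (hb0.trans_lt hbc) (lt_irrefl 0)
  obtain ⟨r₁, hr₁l, hr₁u⟩ := exists_between (show b / ‖Yc‖ < ‖Xc‖ from
    (div_lt_iff₀ hYpos).2 hbc)
  have hr₁pos : 0 < r₁ := (div_nonneg hb0 hYpos.le).trans_lt hr₁l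
  have hbr : b / r₁ < ‖Yc‖ := (div_lt_iff₀ hr₁pos).2
    (by rw [mul_comm]; exact (div_lt_iff₀ hYpos).1 hr₁l)
  obtain ⟨r₂, hr₂l, hr₂u⟩ := exists_between hbr
  have hr₂nonneg : 0 ≤ r₂ := (div_nonneg hb0 hr₁pos.le).trans hr₂l.le
  obtain ⟨z, hz1, hz2⟩ := Xc.exists_lt_apply_of_lt_opNorm hr₁u
  obtain ⟨w, hw1, hw2⟩ := Yc.exists_lt_apply_of_lt_opNorm hr₂u
  set v : H := Yc w with hv
  have hvpos : 0 < ‖v‖ := hr₂nonneg.trans_lt hw2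
  set y : H := (‖v‖ : ℂ)⁻¹ • v with hy
  have hyn : ‖y‖ = 1 := by
    rw [hy, norm_smul, norm_inv, Complex.norm_real, Real.norm_of_nonneg hvpos.le,
      inv_mul_cancel₀ hvpos.ne']
  set a : H →L[ℂ] H := (innerSL ℂ y).smulRight z with ha
  have haA : a ∈ A := hrank y z
  have han : ‖a‖ ≤ 1 := by
    rw [ha, ContinuousLinearMap.norm_smulRight_apply, innerSL_apply_norm, hyn, one_mul]
    exact hz1.le
  have hinner : (inner ℂ y v : ℂ) = (‖v‖ : ℂ) := by
    rw [hy, inner_smul_left, inner_self_eq_norm_sq_to_K, map_inv₀, Complex.conj_ofReal]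
    rw [sq, ← mul_assoc]
    show (‖v‖ : ℂ)⁻¹ * (‖v‖ : ℂ) * (‖v‖ : ℂ) = (‖v‖ : ℂ)
    rw [inv_mul_cancel₀ (Complex.ofReal_ne_zero.mpr hvpos.ne'), one_mul]
  have haw : (Xc * a * Yc) w = (‖v‖ : ℂ) • Xc z := by
    rw [ContinuousLinearMap.mul_apply, ContinuousLinearMap.mul_apply]
    rw [ha]
    simp only [ContinuousLinearMap.smulRight_apply, innerSL_apply_apply]
    rw [← hv, hinner, map_smul]
  have hnormlb : b < ‖Xc * a * Yc‖ := by
    have h1 : ‖(Xc * a * Yc) w‖ = ‖v‖ * ‖Xc z‖ := by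
      rw [haw, norm_smul, Complex.norm_real, Real.norm_of_nonneg hvpos.le]
    have h2 : ‖(Xc * a * Yc) w‖ ≤ ‖Xc * a * Yc‖ := by
      calc ‖(Xc * a * Yc) w‖ ≤ ‖Xc * a * Yc‖ * ‖w‖ := (Xc * a * Yc).le_opNorm w
        _ ≤ ‖Xc * a * Yc‖ * 1 := mul_le_mul_of_nonneg_left hw1.le (norm_nonneg _)
        _ = ‖Xc * a * Yc‖ := mul_one _
    have h3 : b < ‖v‖ * ‖Xc z‖ := by
      have : r₂ * r₁ ≤ ‖v‖ * ‖Xc z‖ :=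
        mul_le_mul hw2.le hz2.le (hr₁pos.le) hvpos.le
      have hb' : b < r₂ * r₁ := (div_lt_iff₀ hr₁pos).1 hr₂l
      linarith
    linarith [h1 ▸ h3, h2]
  have hmem : ‖Xc * a * Yc‖ ∈ S := by
    refine ⟨1, fun _ _ => ⟨a, haA⟩, ?_, ?_⟩
    · rw [show (fun i j : Fin 1 => ((⟨a, haA⟩ : A) : H →L[ℂ] H)) = fun _ _ : Fin 1 => a from rfl,
        matOpNorm_fin_one]
      exact han
    · rw [show (fun i j : Fin 1 => Xc * ((⟨a, haA⟩ : A) : H →L[ℂ] H) * Yc)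
          = fun _ _ : Fin 1 => Xc * a * Yc from rfl, matOpNorm_fin_one]
  exact absurd (hb hmem) (not_le.2 hnormlb)
end
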